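/- arXiv:2507.08358 — 3 statements merged into one kernel-verified Lean document; each statement's English description precedes it below -/
import Mathlib

section
/- There exist 2×2 positive definite matrices A, B and r > 1 such that d_H(A^r, B^r) > r · d_H(A, B). Concretely, with A = diag(1,2) and B = HAH (H the normalized Hadamard matrix), one has ‖A^{-r/2} B^r A^{-r/2}‖_∞ > ‖A^{-1/2} B A^{-1/2}‖_∞^r for every r > 1. -/
open scoped BigOperators ENNReal Kronecker ComplexOrder
open Matrix

noncomputable section

/-- The Schatten `p`-norm of a (possibly rectangular) complex matrix, defined via the
eigenvalues of `Xᴴ * X` (squares of the singular values); `p = ∞` gives the operator norm. -/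
noncomputable def sNorm {a b : Type*} [Fintype a] [Fintype b] [DecidableEq b]
    (p : ℝ≥0∞) (X : Matrix a b ℂ) : ℝ :=
  if p = ∞ then ⨆ i, Real.sqrt (((Matrix.posSemidef_conjTranspose_mul_self X).1).eigenvalues i)
  else (∑ i, (((Matrix.posSemidef_conjTranspose_mul_self X).1).eigenvalues i) ^ (p.toReal / 2)) ^
    (1 / p.toReal)

/-- Real power of a matrix via the functional calculus on Hermitian matrices
(junk value `0` on non-Hermitian input). -/
noncomputable def mpow {d : ℕ} (A : Matrix (Fin d) (Fin d) ℂ) (r : ℝ) :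
    Matrix (Fin d) (Fin d) ℂ :=
  if hA : A.IsHermitian then
    (hA.eigenvectorUnitary : Matrix (Fin d) (Fin d) ℂ) *
      Matrix.diagonal (fun i => ((hA.eigenvalues i ^ r : ℝ) : ℂ)) *
      star (hA.eigenvectorUnitary : Matrix (Fin d) (Fin d) ℂ)
  else 0

/-- The vector `ℓ_p` norm on `ℂ^n`, `p = ∞` giving the max norm. -/
noncomputable def lpNorm {n : ℕ} (p : ℝ≥0∞) (v : Fin n → ℂ) : ℝ :=
  if p = ∞ then ⨆ i, ‖v i‖
  else (∑ i, ‖v i‖ ^ p.toReal) ^ (1 / p.toReal)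

/-- Mixed `ℓ_q → ℓ_p` norm of a matrix. -/
noncomputable def matMixedNorm {m n : ℕ} (q p : ℝ≥0∞) (A : Matrix (Fin m) (Fin n) ℂ) : ℝ :=
  ⨆ v : Fin n → ℂ, lpNorm p (A.mulVec v) / lpNorm q v

/-- Mixed Schatten `q → p` norm of a linear map between matrix spaces. -/
noncomputable def mapMixedNorm {n m : ℕ} (q p : ℝ≥0∞)
    (Φ : Matrix (Fin n) (Fin n) ℂ →ₗ[ℂ] Matrix (Fin m) (Fin m) ℂ) : ℝ :=
  ⨆ X : Matrix (Fin n) (Fin n) ℂ, sNorm p (Φ X) / sNorm q X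

/-- Mixed Schatten `q → p` norm restricted to positive semidefinite inputs. -/
noncomputable def mapMixedNormPos {n m : ℕ} (q p : ℝ≥0∞)
    (Φ : Matrix (Fin n) (Fin n) ℂ →ₗ[ℂ] Matrix (Fin m) (Fin m) ℂ) : ℝ :=
  ⨆ X : {X : Matrix (Fin n) (Fin n) ℂ // X.PosSemidef}, sNorm p (Φ X.1) / sNorm q X.1

/-- The projective Hilbert metric between (positive definite) matrices. -/
noncomputable def dH {d : ℕ} (A B : Matrix (Fin d) (Fin d) ℂ) : ℝ :=
  Real.log (sNorm ∞ (mpow A (-(1/2)) * B * mpow A (-(1/2)))) +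
    Real.log (sNorm ∞ (mpow B (-(1/2)) * A * mpow B (-(1/2))))

/-- The Hilbert–Schmidt adjoint of a linear map between matrix spaces. -/
noncomputable def hsAdj {n m : ℕ}
    (Λ : Matrix (Fin n) (Fin n) ℂ →ₗ[ℂ] Matrix (Fin m) (Fin m) ℂ) :
    Matrix (Fin m) (Fin m) ℂ →ₗ[ℂ] Matrix (Fin n) (Fin n) ℂ where
  toFun H := Matrix.of fun i j => ((Λ (Matrix.single i j 1))ᴴ * H).trace
  map_add' x y := by
    ext i j
    simp [Matrix.mul_add, Matrix.trace_add]
  map_smul' c x := by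
    ext i j
    simp [Matrix.mul_smul, Matrix.trace_smul]

/-- Application of `id_k ⊗ Φ` to a matrix on `ℂ^k ⊗ ℂ^n`, acting blockwise. -/
def blockMap {n m : ℕ} (Φ : Matrix (Fin n) (Fin n) ℂ →ₗ[ℂ] Matrix (Fin m) (Fin m) ℂ) (k : ℕ)
    (M : Matrix (Fin k × Fin n) (Fin k × Fin n) ℂ) : Matrix (Fin k × Fin m) (Fin k × Fin m) ℂ :=
  Matrix.of fun x y => Φ (Matrix.of fun i j => M (x.1, i) (y.1, j)) x.2 y.2

/-- Complete positivity of a linear map between matrix spaces. -/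
def IsCP {n m : ℕ} (Φ : Matrix (Fin n) (Fin n) ℂ →ₗ[ℂ] Matrix (Fin m) (Fin m) ℂ) : Prop :=
  ∀ (k : ℕ) (M : Matrix (Fin k × Fin n) (Fin k × Fin n) ℂ),
    M.PosSemidef → (blockMap Φ k M).PosSemidef

/-- Partial trace over the second tensor factor. -/
def traceRight {a b : ℕ} (ρ : Matrix (Fin a × Fin b) (Fin a × Fin b) ℂ) :
    Matrix (Fin a) (Fin a) ℂ :=
  Matrix.of fun i j => ∑ k, ρ (i, k) (j, k)

/-- Partial trace over the first tensor factor. -/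
def traceLeft {a b : ℕ} (ρ : Matrix (Fin a × Fin b) (Fin a × Fin b) ℂ) :
    Matrix (Fin b) (Fin b) ℂ :=
  Matrix.of fun i j => ∑ k, ρ (k, i) (k, j)

/-- One step of the (quantum) Boyd iteration: `S(ω) = (Λ*( (Λ ω)^(p-1) ))^e`
where `e` plays the role of `1/(q-1)`. -/
noncomputable def boydS {d : ℕ} (Λ : Matrix (Fin d) (Fin d) ℂ →ₗ[ℂ] Matrix (Fin d) (Fin d) ℂ)
    (p e : ℝ) (ω : Matrix (Fin d) (Fin d) ℂ) : Matrix (Fin d) (Fin d) ℂ :=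
  mpow (hsAdj Λ (mpow (Λ ω) (p - 1))) e

/-- The diagonal matrix `diag(1,2)`. -/
noncomputable def A8 : Matrix (Fin 2) (Fin 2) ℂ := Matrix.diagonal ![1, 2]

/-- The normalized 2×2 Hadamard matrix. -/
noncomputable def H8 : Matrix (Fin 2) (Fin 2) ℂ :=
  (((Real.sqrt 2 : ℝ) : ℂ))⁻¹ • !![1, 1; 1, -1]

/-- `B = H A H`. -/
noncomputable def B8 : Matrix (Fin 2) (Fin 2) ℂ := H8 * A8 * H8


noncomputable def Nr (r : ℝ) : ℝ :=
  Real.cosh (r * Real.log 2 / 2) ^ 2 +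
    Real.sinh (r * Real.log 2 / 2) * Real.sqrt (Real.cosh (r * Real.log 2 / 2) ^ 2 + 1)

lemma Nr_mul_conj (r : ℝ) :
    Nr r * (Real.cosh (r * Real.log 2 / 2) ^ 2 -
      Real.sinh (r * Real.log 2 / 2) * Real.sqrt (Real.cosh (r * Real.log 2 / 2) ^ 2 + 1)) = 1 := by
  set u := r * Real.log 2 / 2
  set c := Real.cosh u
  set s := Real.sinh u
  set g := Real.sqrt (c ^ 2 + 1) with hgdef
  have h : g ^ 2 = c ^ 2 + 1 := Real.sq_sqrt (by positivity)
  have hs2 : s ^ 2 = c ^ 2 - 1 := by have := Real.cosh_sq u; linarith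
  show (c ^ 2 + s * g) * (c ^ 2 - s * g) = 1
  linear_combination (-(s^2)) * h + (-(c^2+1)) * hs2

lemma Nr_pos (r : ℝ) : 0 < Nr r := by
  set u := r * Real.log 2 / 2
  set c := Real.cosh u
  set s := Real.sinh u
  set g := Real.sqrt (c ^ 2 + 1) with hgdef
  have h : g ^ 2 = c ^ 2 + 1 := Real.sq_sqrt (by positivity)
  have hs2 : s ^ 2 = c ^ 2 - 1 := by have := Real.cosh_sq u; linarith
  have hcpos : 0 < c := Real.cosh_pos u
  have hgpos : 0 < g := Real.sqrt_pos.mpr (by positivity)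
  show 0 < c ^ 2 + s * g
  nlinarith [sq_nonneg (c^2 + s*g), sq_nonneg (c^2 - s*g), sq_nonneg s, sq_nonneg (s*g)]

lemma Nr_add_inv (r : ℝ) : Nr r + (Nr r)⁻¹ = 2 * Real.cosh (r * Real.log 2 / 2) ^ 2 := by
  have h1 := Nr_mul_conj r
  have h2 := (Nr_pos r).ne'
  have : (Nr r)⁻¹ = Real.cosh (r * Real.log 2 / 2) ^ 2 -
      Real.sinh (r * Real.log 2 / 2) * Real.sqrt (Real.cosh (r * Real.log 2 / 2) ^ 2 + 1) := by
    field_simp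
    linarith [h1]
  rw [this]; unfold Nr; ring

lemma one_le_Nr {r : ℝ} (hr : 0 ≤ r) : 1 ≤ Nr r := by
  have hu : 0 ≤ r * Real.log 2 / 2 := by
    have := Real.log_nonneg (by norm_num : (1:ℝ) ≤ 2); positivity
  have hs : 0 ≤ Real.sinh (r * Real.log 2 / 2) := by
    rw [Real.sinh_nonneg_iff]; exact hu
  have hc : 1 ≤ Real.cosh (r * Real.log 2 / 2) := Real.one_le_cosh _
  unfold Nr
  nlinarith [Real.sqrt_nonneg (Real.cosh (r * Real.log 2 / 2) ^ 2 + 1)]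

private lemma deriv_algebra (L c s g : ℝ) (hgpos : 0 < g)
    (hg2 : g ^ 2 = c ^ 2 + 1) (hs2 : s ^ 2 = c ^ 2 - 1) :
    (2:ℕ) * c ^ (2-1) * (s * (L / 2)) +
      (c * (L / 2) * g + s * (1 / (2 * g) * (2 * c ^ 1 * (s * (L / 2)))))
    = L * c * (c ^ 2 + s * g) / g := by
  field_simp
  linear_combination (L*c) * hs2 + (L*c) * hg2

lemma Nr_hasDerivAt (r : ℝ) :
    HasDerivAt Nr (Real.log 2 * Real.cosh (r * Real.log 2 / 2) * Nr r /
      Real.sqrt (Real.cosh (r * Real.log 2 / 2) ^ 2 + 1)) r := by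
  set L := Real.log 2 with hL
  have hu : HasDerivAt (fun r : ℝ => r * L / 2) (L / 2) r := by
    simpa using ((hasDerivAt_id r).mul_const L).div_const 2
  have hc : HasDerivAt (fun r : ℝ => Real.cosh (r * L / 2))
      (Real.sinh (r * L / 2) * (L / 2)) r := (Real.hasDerivAt_cosh _).comp r hu
  have hs : HasDerivAt (fun r : ℝ => Real.sinh (r * L / 2))
      (Real.cosh (r * L / 2) * (L / 2)) r := (Real.hasDerivAt_sinh _).comp r hu
  set c := Real.cosh (r * L / 2)
  set s := Real.sinh (r * L / 2)
  have hc2 : HasDerivAt (fun r : ℝ => Real.cosh (r * L / 2) ^ 2 + 1)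
      (2 * c ^ 1 * (s * (L / 2))) r := (hc.pow 2).add_const 1
  have hg0 : (c ^ 2 + 1) ≠ 0 := ne_of_gt (by positivity)
  have hg : HasDerivAt (fun r : ℝ => Real.sqrt (Real.cosh (r * L / 2) ^ 2 + 1))
      (1 / (2 * Real.sqrt (c ^ 2 + 1)) * (2 * c ^ 1 * (s * (L / 2)))) r :=
    (Real.hasDerivAt_sqrt hg0).comp r hc2
  set g := Real.sqrt (c ^ 2 + 1) with hgdef
  have hgpos : 0 < g := Real.sqrt_pos.mpr (by positivity)
  have hg2 : g ^ 2 = c ^ 2 + 1 := Real.sq_sqrt (by positivity)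
  have hs2 : s ^ 2 = c ^ 2 - 1 := by have := Real.cosh_sq (r * L / 2); linarith
  have hN := (hc.pow 2).add (hs.mul hg)
  refine hN.congr_deriv ?_
  have hNr : Nr r = c ^ 2 + s * g := rfl
  rw [hNr]
  exact (deriv_algebra L c s g hgpos hg2 hs2)

noncomputable def psir (r : ℝ) : ℝ := Real.log (Nr r)

lemma psir_hasDerivAt (r : ℝ) :
    HasDerivAt psir (Real.log 2 * Real.cosh (r * Real.log 2 / 2) /
      Real.sqrt (Real.cosh (r * Real.log 2 / 2) ^ 2 + 1)) r := by
  have h := (Nr_hasDerivAt r).log (Nr_pos r).ne'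
  refine h.congr_deriv ?_
  set c := Real.cosh (r * Real.log 2 / 2)
  set g := Real.sqrt (c ^ 2 + 1) with hgdef
  have hgpos : 0 < g := Real.sqrt_pos.mpr (by positivity)
  have : Real.log 2 * c * Nr r / g / Nr r = Real.log 2 * c / g * (Nr r / Nr r) := by ring
  rw [this, div_self (Nr_pos r).ne', mul_one]

lemma deriv_psir : deriv psir = fun r => Real.log 2 * Real.cosh (r * Real.log 2 / 2) /
      Real.sqrt (Real.cosh (r * Real.log 2 / 2) ^ 2 + 1) :=
  funext fun r => (psir_hasDerivAt r).deriv

private lemma mono_aux' {a b : ℝ} (ha : 0 < a) (hab : a < b) :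
    a / Real.sqrt (a ^ 2 + 1) < b / Real.sqrt (b ^ 2 + 1) := by
  have h1 : a / Real.sqrt (a ^ 2 + 1) = Real.sqrt (a ^ 2 / (a ^ 2 + 1)) := by
    rw [Real.sqrt_div (sq_nonneg a), Real.sqrt_sq ha.le]
  have h2 : b / Real.sqrt (b ^ 2 + 1) = Real.sqrt (b ^ 2 / (b ^ 2 + 1)) := by
    rw [Real.sqrt_div (sq_nonneg b), Real.sqrt_sq (ha.trans hab).le]
  rw [h1, h2]
  apply Real.sqrt_lt_sqrt (by positivity)
  rw [div_lt_div_iff₀ (by positivity) (by positivity)]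
  nlinarith

private lemma mono_aux {L a b : ℝ} (hL : 0 < L) (ha : 0 < a) (hab : a < b) :
    L * a / Real.sqrt (a ^ 2 + 1) < L * b / Real.sqrt (b ^ 2 + 1) := by
  have key : a / Real.sqrt (a ^ 2 + 1) < b / Real.sqrt (b ^ 2 + 1) := mono_aux' ha hab
  rw [mul_div_assoc, mul_div_assoc]
  exact mul_lt_mul_of_pos_left key hL

lemma psir_strictMono_deriv : StrictMonoOn (deriv psir) (Set.Ioi (0:ℝ)) := by
  intro x hx y hy hxy
  rw [deriv_psir]
  have hL : 0 < Real.log 2 := Real.log_pos (by norm_num)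
  have hcx : 1 ≤ Real.cosh (x * Real.log 2 / 2) := Real.one_le_cosh _
  have hc : Real.cosh (x * Real.log 2 / 2) < Real.cosh (y * Real.log 2 / 2) := by
    rw [Real.cosh_lt_cosh]
    have hx0 : (0:ℝ) < x := hx
    have hy0 : (0:ℝ) < y := hy
    rw [abs_of_pos (by positivity), abs_of_pos (by positivity)]
    have : x * Real.log 2 < y * Real.log 2 := by
      exact mul_lt_mul_of_pos_right hxy hL
    linarith
  exact mono_aux hL (by linarith) hc

lemma psir_strictConvexOn : StrictConvexOn ℝ (Set.Ici (0:ℝ)) psir := by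
  apply StrictMonoOn.strictConvexOn_of_deriv (convex_Ici 0)
  · exact Continuous.continuousOn (by
      apply continuous_iff_continuousAt.mpr
      intro r
      exact (psir_hasDerivAt r).continuousAt)
  · rw [interior_Ici]
    exact psir_strictMono_deriv

lemma psir_zero : psir 0 = 0 := by
  simp [psir, Nr]

lemma psir_lt {r : ℝ} (hr : 1 < r) : r * psir 1 < psir r := by
  have hr0 : (0:ℝ) < r := by linarith
  have ha : (0:ℝ) < 1 - 1/r := by
    have : 1/r < 1 := by rw [div_lt_one hr0]; exact hr
    linarith
  have hb : (0:ℝ) < 1/r := by positivity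
  have hab : (1 - 1/r) + 1/r = 1 := by ring
  have hne : (0:ℝ) ≠ r := ne_of_lt hr0
  have h := psir_strictConvexOn.2 (Set.self_mem_Ici (a := (0:ℝ)))
    (Set.mem_Ici.mpr hr0.le) hne ha hb hab
  have hx : (1 - 1/r) • (0:ℝ) + (1/r) • r = 1 := by
    simp only [smul_eq_mul]
    field_simp
    ring
  rw [hx, psir_zero] at h
  simp only [smul_eq_mul, mul_zero, zero_add] at h
  have h2 := (mul_lt_mul_iff_right₀ hr0).mpr h
  calc r * psir 1 < r * (1/r * psir r) := h2
    _ = psir r := by field_simp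

lemma Nr_rpow_lt {r : ℝ} (hr : 1 < r) : Nr 1 ^ r < Nr r := by
  have h1 : Nr 1 ^ r = Real.exp (r * psir 1) := by
    rw [Real.rpow_def_of_pos (Nr_pos 1), psir, mul_comm]
  have h2 : Nr r = Real.exp (psir r) := (Real.exp_log (Nr_pos r)).symm
  rw [h1, h2]
  exact Real.exp_lt_exp.mpr (psir_lt hr)

section MatHelpers
open Matrix

lemma trace_eq_sum_ev {M : Matrix (Fin 2) (Fin 2) ℂ} (hM : M.IsHermitian) :
    M.trace = ∑ i, (hM.eigenvalues i : ℂ) := by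
  have hU2 : star (hM.eigenvectorUnitary : Matrix (Fin 2) (Fin 2) ℂ) *
      (hM.eigenvectorUnitary : Matrix (Fin 2) (Fin 2) ℂ) = 1 :=
    Matrix.mem_unitaryGroup_iff'.mp (hM.eigenvectorUnitary).2
  conv_lhs => rw [hM.spectral_theorem, Unitary.conjStarAlgAut_apply]
  rw [Matrix.trace_mul_comm, ← mul_assoc, hU2, one_mul, Matrix.trace_diagonal]
  rfl

lemma ev_mem {M : Matrix (Fin 2) (Fin 2) ℂ} (hM : M.IsHermitian) {a : ℝ}
    (htr : M.trace = ((1 + a : ℝ) : ℂ)) (hdet : M.det = (a : ℂ)) (i : Fin 2) :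
    hM.eigenvalues i = 1 ∨ hM.eigenvalues i = a := by
  have h1 : M.trace = ((hM.eigenvalues 0 + hM.eigenvalues 1 : ℝ) : ℂ) := by
    rw [trace_eq_sum_ev hM, Fin.sum_univ_two]; push_cast; ring
  have h2 : M.det = ((hM.eigenvalues 0 * hM.eigenvalues 1 : ℝ) : ℂ) := by
    rw [hM.det_eq_prod_eigenvalues, Fin.prod_univ_two]; push_cast; rfl
  rw [htr] at h1
  rw [hdet] at h2
  have hsum : hM.eigenvalues 0 + hM.eigenvalues 1 = 1 + a := by exact_mod_cast h1.symm
  have hprod : hM.eigenvalues 0 * hM.eigenvalues 1 = a := by exact_mod_cast h2.symm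
  fin_cases i
  · show hM.eigenvalues 0 = 1 ∨ hM.eigenvalues 0 = a
    have h0 : (hM.eigenvalues 0 - 1) * (hM.eigenvalues 0 - a) = 0 := by
      linear_combination hM.eigenvalues 0 * hsum - hprod
    rcases mul_eq_zero.mp h0 with h | h
    · exact Or.inl (by linarith)
    · exact Or.inr (by linarith)
  · show hM.eigenvalues 1 = 1 ∨ hM.eigenvalues 1 = a
    have h0 : (hM.eigenvalues 1 - 1) * (hM.eigenvalues 1 - a) = 0 := by
      linear_combination hM.eigenvalues 1 * hsum - hprod
    rcases mul_eq_zero.mp h0 with h | h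
    · exact Or.inl (by linarith)
    · exact Or.inr (by linarith)

lemma mpow_eq_comb {M : Matrix (Fin 2) (Fin 2) ℂ} (hM : M.IsHermitian) {a : ℝ} (s : ℝ)
    (ha0 : 0 < a) (ha1 : a ≠ 1)
    (htr : M.trace = ((1 + a : ℝ) : ℂ)) (hdet : M.det = (a : ℂ)) :
    mpow M s = (((a ^ s - 1) / (a - 1) : ℝ) : ℂ) • M + (((a - a ^ s) / (a - 1) : ℝ) : ℂ) • 1 := by
  have hU1 : (hM.eigenvectorUnitary : Matrix (Fin 2) (Fin 2) ℂ) *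
      star (hM.eigenvectorUnitary : Matrix (Fin 2) (Fin 2) ℂ) = 1 :=
    Matrix.mem_unitaryGroup_iff.mp (hM.eigenvectorUnitary).2
  have ha : a - 1 ≠ 0 := sub_ne_zero.mpr ha1
  have hdiag : Matrix.diagonal (fun i => ((hM.eigenvalues i ^ s : ℝ) : ℂ))
      = (((a ^ s - 1) / (a - 1) : ℝ) : ℂ) • Matrix.diagonal (RCLike.ofReal ∘ hM.eigenvalues)
        + (((a - a ^ s) / (a - 1) : ℝ) : ℂ) • (1 : Matrix (Fin 2) (Fin 2) ℂ) := by
    ext i j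
    by_cases hij : i = j
    · subst hij
      simp only [Matrix.diagonal_apply_eq, Matrix.add_apply, Matrix.smul_apply,
        Matrix.one_apply_eq, Function.comp_apply, smul_eq_mul, mul_one]
      have key : (hM.eigenvalues i ^ s : ℝ)
          = (a ^ s - 1) / (a - 1) * hM.eigenvalues i + (a - a ^ s) / (a - 1) := by
        rcases ev_mem hM htr hdet i with h | h <;> rw [h]
        · rw [Real.one_rpow]; field_simp; ring
        · field_simp; ring
      rw [show (RCLike.ofReal (hM.eigenvalues i) : ℂ) = ((hM.eigenvalues i : ℝ) : ℂ) from rfl]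
      rw [← Complex.ofReal_mul, ← Complex.ofReal_add, key]
    · simp [Matrix.diagonal_apply_ne _ hij, Matrix.one_apply_ne hij]
  rw [mpow, dif_pos hM, hdiag]
  rw [Matrix.mul_add, Matrix.add_mul]
  rw [Matrix.mul_smul, Matrix.smul_mul, Matrix.mul_smul, Matrix.smul_mul, mul_one, hU1]
  have hsp := hM.spectral_theorem
  rw [Unitary.conjStarAlgAut_apply] at hsp
  rw [← hsp]

end MatHelpers

section MatHelpers2
open Matrix

noncomputable def Dm (a : ℝ) : Matrix (Fin 2) (Fin 2) ℂ := !![1, 0; 0, (a:ℂ)]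

noncomputable def RM (w x y z : ℝ) : Matrix (Fin 2) (Fin 2) ℂ :=
  !![(w:ℂ), (x:ℂ); (y:ℂ), (z:ℂ)]

lemma Dm_herm (a : ℝ) : (Dm a).IsHermitian := by
  ext i j
  fin_cases i <;> fin_cases j <;>
    simp [Dm, Matrix.conjTranspose_apply]

lemma Dm_trace (a : ℝ) : (Dm a).trace = ((1 + a : ℝ) : ℂ) := by
  simp [Dm, Matrix.trace_fin_two]

lemma Dm_det (a : ℝ) : (Dm a).det = (a : ℂ) := by
  simp [Dm, Matrix.det_fin_two_of]

lemma comb_Dm (a s : ℝ) (ha : a - 1 ≠ 0) :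
    (((a ^ s - 1) / (a - 1) : ℝ) : ℂ) • Dm a + (((a - a ^ s) / (a - 1) : ℝ) : ℂ) • 1
      = Dm (a ^ s) := by
  have ha' : (a : ℂ) - 1 ≠ 0 := by
    intro h
    exact ha (by exact_mod_cast h)
  ext i j
  fin_cases i <;> fin_cases j
  all_goals simp [Dm, Matrix.one_apply]
  all_goals push_cast
  all_goals field_simp
  all_goals try ring

lemma mpow_Dm {a : ℝ} (s : ℝ) (ha0 : 0 < a) (ha1 : a ≠ 1) :
    mpow (Dm a) s = Dm (a ^ s) := by
  rw [mpow_eq_comb (Dm_herm a) s ha0 ha1 (Dm_trace a) (Dm_det a),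
    comb_Dm a s (sub_ne_zero.mpr ha1)]

lemma H8_herm_eq : H8ᴴ = H8 := by
  ext i j
  fin_cases i <;> fin_cases j <;>
    simp [H8, Matrix.conjTranspose_apply]

lemma H8_mul_self : H8 * H8 = 1 := by
  have h2 : ((Real.sqrt 2 : ℝ) : ℂ) * ((Real.sqrt 2 : ℝ) : ℂ) = 2 := by
    rw [← Complex.ofReal_mul, Real.mul_self_sqrt (by norm_num : (0:ℝ) ≤ 2)]
    norm_num
  have h0 : ((Real.sqrt 2 : ℝ) : ℂ) ≠ 0 := by
    intro h
    have : Real.sqrt 2 = 0 := by exact_mod_cast h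
    have := Real.sqrt_pos.mpr (by norm_num : (0:ℝ) < 2)
    linarith
  rw [H8, Matrix.smul_mul, Matrix.mul_smul, smul_smul, Matrix.mul_fin_two]
  ext i j
  fin_cases i <;> fin_cases j
  all_goals simp [Matrix.one_apply]
  all_goals field_simp
  all_goals try linear_combination (-1 : ℂ) * h2

lemma HMH_trace (M : Matrix (Fin 2) (Fin 2) ℂ) : (H8 * M * H8).trace = M.trace := by
  rw [Matrix.trace_mul_comm, ← mul_assoc, H8_mul_self, one_mul]

lemma HMH_det (M : Matrix (Fin 2) (Fin 2) ℂ) : (H8 * M * H8).det = M.det := by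
  rw [Matrix.det_mul, Matrix.det_mul]
  have : H8.det * H8.det = 1 := by rw [← Matrix.det_mul, H8_mul_self, Matrix.det_one]
  calc H8.det * M.det * H8.det = H8.det * H8.det * M.det := by ring
    _ = M.det := by rw [this, one_mul]

lemma HMH_herm {M : Matrix (Fin 2) (Fin 2) ℂ} (hM : M.IsHermitian) :
    (H8 * M * H8).IsHermitian := by
  have : (H8 * M * H8)ᴴ = H8ᴴ * Mᴴ * H8ᴴ := by
    rw [Matrix.conjTranspose_mul, Matrix.conjTranspose_mul, mul_assoc]
  rw [Matrix.IsHermitian, this, H8_herm_eq, hM.eq]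

lemma mpow_HDmH {a : ℝ} (s : ℝ) (ha0 : 0 < a) (ha1 : a ≠ 1) :
    mpow (H8 * Dm a * H8) s = H8 * Dm (a ^ s) * H8 := by
  rw [mpow_eq_comb (HMH_herm (Dm_herm a)) s ha0 ha1
    (by rw [HMH_trace, Dm_trace]) (by rw [HMH_det, Dm_det]),
    ← comb_Dm a s (sub_ne_zero.mpr ha1)]
  simp only [Matrix.mul_add, Matrix.add_mul, Matrix.mul_smul, Matrix.smul_mul, mul_one,
    H8_mul_self]

lemma HDH (p : ℝ) : H8 * Dm p * H8 = RM ((1+p)/2) ((1-p)/2) ((1-p)/2) ((1+p)/2) := by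
  have h2 : ((Real.sqrt 2 : ℝ) : ℂ) * ((Real.sqrt 2 : ℝ) : ℂ) = 2 := by
    rw [← Complex.ofReal_mul, Real.mul_self_sqrt (by norm_num : (0:ℝ) ≤ 2)]
    norm_num
  have h0 : ((Real.sqrt 2 : ℝ) : ℂ) ≠ 0 := by
    intro h
    have h' : Real.sqrt 2 = 0 := by exact_mod_cast h
    have := Real.sqrt_pos.mpr (by norm_num : (0:ℝ) < 2)
    linarith
  have hinv : ((Real.sqrt 2 : ℝ) : ℂ)⁻¹ * ((Real.sqrt 2 : ℝ) : ℂ)⁻¹ = 2⁻¹ := by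
    rw [← mul_inv, h2]
  simp only [H8, Dm, Matrix.smul_mul, Matrix.mul_smul, smul_smul, hinv,
    Matrix.mul_fin_two]
  ext i j
  fin_cases i <;> fin_cases j
  all_goals simp [RM, Matrix.smul_apply]
  all_goals push_cast
  all_goals ring

lemma X1_eq (p q : ℝ) : Dm q * (H8 * Dm p * H8) * Dm q
    = RM ((1+p)/2) ((1-p)/2*q) ((1-p)/2*q) ((1+p)/2*q*q) := by
  rw [HDH, Dm, RM, RM, Matrix.mul_fin_two, Matrix.mul_fin_two]
  ext i j
  fin_cases i <;> fin_cases j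
  all_goals simp only [Matrix.cons_val', Matrix.cons_val_zero, Matrix.cons_val_one,
    Matrix.head_cons, Matrix.head_fin_const, Matrix.of_apply, Matrix.cons_val_fin_one,
    Matrix.empty_val']
  all_goals push_cast
  all_goals ring

lemma RM_herm (w x z : ℝ) : (RM w x x z).IsHermitian := by
  ext i j
  fin_cases i <;> fin_cases j <;>
    simp [RM, Matrix.conjTranspose_apply]

lemma RM_mul_trace (w x z : ℝ) :
    ((RM w x x z)ᴴ * RM w x x z).trace = ((w^2 + 2*x^2 + z^2 : ℝ) : ℂ) := by
  rw [(RM_herm w x z).eq, RM, Matrix.mul_fin_two, Matrix.trace_fin_two]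
  simp only [Matrix.cons_val', Matrix.cons_val_zero, Matrix.cons_val_one,
    Matrix.head_cons, Matrix.head_fin_const, Matrix.of_apply, Matrix.cons_val_fin_one,
    Matrix.empty_val']
  push_cast
  ring

lemma RM_mul_det (w x z : ℝ) :
    ((RM w x x z)ᴴ * RM w x x z).det = (((w*z - x^2)^2 : ℝ) : ℂ) := by
  rw [(RM_herm w x z).eq, RM, Matrix.mul_fin_two, Matrix.det_fin_two_of]
  push_cast
  ring

lemma isup_fin2 (f : Fin 2 → ℝ) : (⨆ i, f i) = max (f 0) (f 1) := by
  apply le_antisymm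
  · refine ciSup_le fun i => ?_
    fin_cases i
    · exact le_max_left _ _
    · exact le_max_right _ _
  · apply max_le <;>
      exact le_ciSup (Set.Finite.bddAbove (Set.finite_range f)) _

lemma sNorm_eq {X : Matrix (Fin 2) (Fin 2) ℂ} {N : ℝ} (hN : 1 ≤ N)
    (htr : (Xᴴ * X).trace = ((N^2 + (N^2)⁻¹ : ℝ) : ℂ))
    (hdet : (Xᴴ * X).det = 1) :
    sNorm ∞ X = N := by
  have hN0 : (0:ℝ) < N := by linarith
  set hH := (Matrix.posSemidef_conjTranspose_mul_self X).1 with hHdef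
  have h1 : (Xᴴ * X).trace = ((hH.eigenvalues 0 + hH.eigenvalues 1 : ℝ) : ℂ) := by
    rw [trace_eq_sum_ev hH, Fin.sum_univ_two]; push_cast; ring
  have h2 : (Xᴴ * X).det = ((hH.eigenvalues 0 * hH.eigenvalues 1 : ℝ) : ℂ) := by
    rw [hH.det_eq_prod_eigenvalues, Fin.prod_univ_two]; push_cast; rfl
  rw [htr] at h1
  rw [hdet] at h2
  have hsum : hH.eigenvalues 0 + hH.eigenvalues 1 = N^2 + (N^2)⁻¹ := by exact_mod_cast h1.symm
  have hprod : hH.eigenvalues 0 * hH.eigenvalues 1 = 1 := by exact_mod_cast h2.symm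
  have hnn : ∀ i, 0 ≤ hH.eigenvalues i :=
    (Matrix.posSemidef_conjTranspose_mul_self X).eigenvalues_nonneg
  have hroot : (hH.eigenvalues 0 - N^2) * (hH.eigenvalues 0 - (N^2)⁻¹) = 0 := by
    have hNN : (N^2) * (N^2)⁻¹ = 1 := mul_inv_cancel₀ (by positivity)
    linear_combination hH.eigenvalues 0 * hsum - hprod + hNN
  have hNinv : N⁻¹ ≤ N := by
    nlinarith [mul_inv_cancel₀ hN0.ne', inv_nonneg.mpr hN0.le]
  have hmax : max N N⁻¹ = N := max_eq_left hNinv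
  have hs1 : Real.sqrt (N^2) = N := Real.sqrt_sq hN0.le
  have hs2 : Real.sqrt ((N^2)⁻¹) = N⁻¹ := by
    rw [← inv_pow, Real.sqrt_sq (inv_nonneg.mpr hN0.le)]
  rw [sNorm, if_pos rfl, isup_fin2]
  rcases mul_eq_zero.mp hroot with h | h
  · have he0 : hH.eigenvalues 0 = N^2 := by linarith [sub_eq_zero.mp h]
    have he1 : hH.eigenvalues 1 = (N^2)⁻¹ := by
      have hNe : (N^2) ≠ 0 := by positivity
      rw [he0] at hprod
      field_simp
      linarith [hprod]
    show Real.sqrt (hH.eigenvalues 0) ⊔ Real.sqrt (hH.eigenvalues 1) = N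
    rw [he0, he1, hs1, hs2, hmax]
  · have he0 : hH.eigenvalues 0 = (N^2)⁻¹ := by linarith [sub_eq_zero.mp h]
    have he1 : hH.eigenvalues 1 = N^2 := by
      have hNe : (N^2) ≠ 0 := by positivity
      rw [he0] at hprod
      field_simp at hprod ⊢
      linarith [hprod]
    show Real.sqrt (hH.eigenvalues 0) ⊔ Real.sqrt (hH.eigenvalues 1) = N
    rw [he0, he1, hs1, hs2, max_comm, hmax]

lemma Nr_sum (r : ℝ) : Nr r + (Nr r)⁻¹ = 1 + ((2:ℝ)^r + ((2:ℝ)^r)⁻¹)/2 := by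
  rw [Nr_add_inv]
  have he : Real.exp (r * Real.log 2) = (2:ℝ)^r := by
    rw [Real.rpow_def_of_pos (by norm_num : (0:ℝ) < 2), mul_comm]
  have h1 : Real.cosh (r * Real.log 2) = ((2:ℝ)^r + ((2:ℝ)^r)⁻¹)/2 := by
    rw [Real.cosh_eq, Real.exp_neg, he]
  have h2 := Real.cosh_two_mul (r * Real.log 2 / 2)
  have hsq := Real.cosh_sq (r * Real.log 2 / 2)
  have harg : 2 * (r * Real.log 2 / 2) = r * Real.log 2 := by ring
  rw [harg] at h2
  linarith

lemma trace_val (r : ℝ) :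
    ((1+(2:ℝ)^r)/2)^2 + 2*((1-(2:ℝ)^r)/2*(2:ℝ)^(-(r/2)))^2
      + ((1+(2:ℝ)^r)/2*(2:ℝ)^(-(r/2))*(2:ℝ)^(-(r/2)))^2
      = (Nr r)^2 + ((Nr r)^2)⁻¹ := by
  set p := (2:ℝ)^r with hpdef
  set q := (2:ℝ)^(-(r/2)) with hqdef
  have hp : 0 < p := Real.rpow_pos_of_pos (by norm_num) r
  have hq2 : q * q = p⁻¹ := by
    rw [hqdef, hpdef, ← Real.rpow_add (by norm_num : (0:ℝ) < 2),
      show -(r/2) + -(r/2) = -r by ring, Real.rpow_neg (by norm_num : (0:ℝ) ≤ 2)]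
  have hN0 : Nr r ≠ 0 := (Nr_pos r).ne'
  have key : (Nr r)^2 + ((Nr r)^2)⁻¹ = (Nr r + (Nr r)⁻¹)^2 - 2 := by
    field_simp
    ring
  rw [key, Nr_sum r]
  have e1 : 2*((1-p)/2*q)^2 = 2*((1-p)/2)^2 * p⁻¹ := by
    rw [show 2*((1-p)/2*q)^2 = 2*((1-p)/2)^2*(q*q) from by ring, hq2]
  have e2 : ((1+p)/2*q*q)^2 = ((1+p)/2)^2 * (p⁻¹*p⁻¹) := by
    rw [show ((1+p)/2*q*q)^2 = ((1+p)/2)^2*((q*q)*(q*q)) from by ring, hq2]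
  rw [e1, e2]
  field_simp
  ring

lemma det_val (r : ℝ) :
    ((1+(2:ℝ)^r)/2*((1+(2:ℝ)^r)/2*(2:ℝ)^(-(r/2))*(2:ℝ)^(-(r/2)))
      - ((1-(2:ℝ)^r)/2*(2:ℝ)^(-(r/2)))^2)^2 = 1 := by
  set p := (2:ℝ)^r with hpdef
  set q := (2:ℝ)^(-(r/2)) with hqdef
  have hp : 0 < p := Real.rpow_pos_of_pos (by norm_num) r
  have hq2 : q * q = p⁻¹ := by
    rw [hqdef, hpdef, ← Real.rpow_add (by norm_num : (0:ℝ) < 2),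
      show -(r/2) + -(r/2) = -r by ring, Real.rpow_neg (by norm_num : (0:ℝ) ≤ 2)]
  have e : (1+p)/2*((1+p)/2*q*q) - ((1-p)/2*q)^2 = p * (q*q) := by ring
  rw [e, hq2, mul_inv_cancel₀ hp.ne', one_pow]

lemma norm_X1 (r : ℝ) (hr : 0 ≤ r) :
    sNorm ∞ (Dm ((2:ℝ)^(-(r/2))) * (H8 * Dm ((2:ℝ)^r) * H8) * Dm ((2:ℝ)^(-(r/2)))) = Nr r := by
  rw [X1_eq]
  apply sNorm_eq (one_le_Nr hr)
  · rw [RM_mul_trace, trace_val r]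
  · rw [RM_mul_det, det_val r]
    norm_num

lemma norm_Y (r : ℝ) (hr : 0 ≤ r) :
    sNorm ∞ ((H8 * Dm ((2:ℝ)^(-(r/2))) * H8) * Dm ((2:ℝ)^r) * (H8 * Dm ((2:ℝ)^(-(r/2))) * H8))
      = Nr r := by
  have hassoc : (H8 * Dm ((2:ℝ)^(-(r/2))) * H8) * Dm ((2:ℝ)^r) * (H8 * Dm ((2:ℝ)^(-(r/2))) * H8)
      = H8 * (Dm ((2:ℝ)^(-(r/2))) * (H8 * Dm ((2:ℝ)^r) * H8) * Dm ((2:ℝ)^(-(r/2)))) * H8 := by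
    simp only [Matrix.mul_assoc]
  rw [hassoc, X1_eq]
  set Z := RM ((1+(2:ℝ)^r)/2) ((1-(2:ℝ)^r)/2*(2:ℝ)^(-(r/2))) ((1-(2:ℝ)^r)/2*(2:ℝ)^(-(r/2)))
    ((1+(2:ℝ)^r)/2*(2:ℝ)^(-(r/2))*(2:ℝ)^(-(r/2))) with hZ
  have h4 : (H8 * Z * H8)ᴴ = H8 * Zᴴ * H8 := by
    rw [Matrix.conjTranspose_mul, Matrix.conjTranspose_mul, H8_herm_eq, Matrix.mul_assoc]
  have haux : H8 * (H8 * (Z * H8)) = Z * H8 := by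
    rw [← Matrix.mul_assoc, H8_mul_self, one_mul]
  have h5 : (H8 * Z * H8)ᴴ * (H8 * Z * H8) = H8 * (Zᴴ * Z) * H8 := by
    rw [h4]
    simp only [Matrix.mul_assoc]
    rw [haux]
  apply sNorm_eq (one_le_Nr hr)
  · rw [h5, HMH_trace, hZ, RM_mul_trace, trace_val r]
  · rw [h5, HMH_det, hZ, RM_mul_det, det_val r]
    norm_num

lemma dH_val (r : ℝ) (hr : 0 < r) :
    dH (Dm ((2:ℝ)^r)) (H8 * Dm ((2:ℝ)^r) * H8) = 2 * Real.log (Nr r) := by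
  have hp0 : (0:ℝ) < (2:ℝ)^r := Real.rpow_pos_of_pos (by norm_num) r
  have hpgt : (1:ℝ) < (2:ℝ)^r :=
    Real.one_lt_rpow_iff_of_pos (by norm_num) |>.mpr (Or.inl ⟨by norm_num, hr⟩)
  have hp1 : (2:ℝ)^r ≠ 1 := ne_of_gt hpgt
  have hexp : ((2:ℝ)^r)^(-(1/2):ℝ) = (2:ℝ)^(-(r/2)) := by
    rw [← Real.rpow_mul (by norm_num : (0:ℝ) ≤ 2)]
    congr 1
    ring
  rw [dH, mpow_Dm (-(1/2)) hp0 hp1, mpow_HDmH (-(1/2)) hp0 hp1, hexp,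
    norm_X1 r hr.le, norm_Y r hr.le]
  ring

lemma A8_eq : A8 = Dm 2 := by
  ext i j
  fin_cases i <;> fin_cases j <;> simp [A8, Dm]

lemma B8_eq : B8 = H8 * Dm 2 * H8 := by
  rw [B8, A8_eq]

lemma Dm_two_pow_one : Dm ((2:ℝ)^(1:ℝ)) = Dm 2 := by
  rw [Real.rpow_one]

lemma A8_posDef : A8.PosDef := by
  rw [A8]
  rw [Matrix.posDef_diagonal_iff]
  intro i
  fin_cases i <;> norm_num

lemma B8_posDef : B8.PosDef := by
  have hA := A8_posDef
  refine Matrix.posDef_iff_dotProduct_mulVec.mpr ⟨?_, ?_⟩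
  · rw [B8]
    exact HMH_herm hA.1
  · intro x hx
    have hxH : H8 *ᵥ x ≠ 0 := by
      intro h
      apply hx
      have : H8 *ᵥ (H8 *ᵥ x) = x := by
        rw [Matrix.mulVec_mulVec, H8_mul_self, Matrix.one_mulVec]
      rw [← this, h, Matrix.mulVec_zero]
    have key := hA.dotProduct_mulVec_pos hxH
    have hB : B8 = H8ᴴ * A8 * H8 := by rw [H8_herm_eq]; rfl
    rw [hB]
    simpa only [Matrix.star_mulVec, Matrix.dotProduct_mulVec, Matrix.vecMul_vecMul] using key

theorem exists_rpow_hilbert_metric_expansion' :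
    (∃ (A B : Matrix (Fin 2) (Fin 2) ℂ) (r : ℝ), A.PosDef ∧ B.PosDef ∧ 1 < r ∧
      r * dH A B < dH (mpow A r) (mpow B r)) ∧
    ∀ r : ℝ, 1 < r →
      sNorm ∞ (mpow A8 (-(1/2)) * B8 * mpow A8 (-(1/2))) ^ r <
        sNorm ∞ (mpow A8 (-(r/2)) * mpow B8 r * mpow A8 (-(r/2))) ∧
      r * dH A8 B8 < dH (mpow A8 r) (mpow B8 r) := by
  have h20 : (0:ℝ) < 2 := by norm_num
  have h21 : (2:ℝ) ≠ 1 := by norm_num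
  have main : ∀ r : ℝ, 1 < r →
      sNorm ∞ (mpow A8 (-(1/2)) * B8 * mpow A8 (-(1/2))) ^ r <
        sNorm ∞ (mpow A8 (-(r/2)) * mpow B8 r * mpow A8 (-(r/2))) ∧
      r * dH A8 B8 < dH (mpow A8 r) (mpow B8 r) := by
    intro r hr
    have hr0 : (0:ℝ) < r := by linarith
    constructor
    · -- norm inequality
      have hbase : sNorm ∞ (mpow A8 (-(1/2)) * B8 * mpow A8 (-(1/2))) = Nr 1 := by
        rw [A8_eq, B8_eq, mpow_Dm (-(1/2)) h20 h21]
        have := norm_X1 1 (by norm_num)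
        rw [Dm_two_pow_one] at this
        rw [show (-((1:ℝ)/2)) = (-(1/2):ℝ) from rfl] at this
        exact this
      have hrhs : sNorm ∞ (mpow A8 (-(r/2)) * mpow B8 r * mpow A8 (-(r/2))) = Nr r := by
        rw [A8_eq, B8_eq, mpow_Dm (-(r/2)) h20 h21, mpow_HDmH r h20 h21]
        exact norm_X1 r hr0.le
      rw [hbase, hrhs]
      exact Nr_rpow_lt hr
    · -- dH inequality
      have hd1 : dH A8 B8 = 2 * Real.log (Nr 1) := by
        rw [A8_eq, B8_eq, ← Dm_two_pow_one]
        exact dH_val 1 one_pos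
      have hdr : dH (mpow A8 r) (mpow B8 r) = 2 * Real.log (Nr r) := by
        rw [A8_eq, B8_eq, mpow_Dm r h20 h21, mpow_HDmH r h20 h21]
        exact dH_val r hr0
      rw [hd1, hdr]
      have := psir_lt hr
      simp only [psir] at this
      linarith
  refine ⟨⟨A8, B8, 2, A8_posDef, B8_posDef, by norm_num, (main 2 (by norm_num)).2⟩, main⟩

end MatHelpers2

/-- for `r > 1` the map `A ↦ A^r` expands the Hilbert metric beyond factor `r`
on the concrete pair `A = diag(1,2)`, `B = HAH`; in particular such matrices exist. -/
theorem exists_rpow_hilbert_metric_expansion :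
    (∃ (A B : Matrix (Fin 2) (Fin 2) ℂ) (r : ℝ), A.PosDef ∧ B.PosDef ∧ 1 < r ∧
      r * dH A B < dH (mpow A r) (mpow B r)) ∧
    ∀ r : ℝ, 1 < r →
      sNorm ∞ (mpow A8 (-(1/2)) * B8 * mpow A8 (-(1/2))) ^ r <
        sNorm ∞ (mpow A8 (-(r/2)) * mpow B8 r * mpow A8 (-(r/2))) ∧
      r * dH A8 B8 < dH (mpow A8 r) (mpow B8 r) :=
  exists_rpow_hilbert_metric_expansion'

end
end

section
/- Let ρ, σ be positive definite operators on a finite-dimensional Hilbert space with ‖ρ‖_q = ‖σ‖_q ≠ 0 for some q ∈ [1,∞]. Then ρ ≤ exp(d_H(ρ,σ)) σ and σ ≤ exp(d_H(ρ,σ)) ρ, where d_H is the projective Hilbert metric. -/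
open scoped BigOperators ENNReal Kronecker ComplexOrder
open Matrix

noncomputable section

open Polynomial

variable {d : ℕ}

lemma charpoly_unitary_conj {n : Type*} [Fintype n] [DecidableEq n]
    (U M : Matrix n n ℂ) (hU : U ∈ Matrix.unitaryGroup n ℂ) :
    (U * M * star U).charpoly = M.charpoly := by
  classical
  let φ : Matrix n n ℂ →+* Matrix n n ℂ[X] := (C : ℂ →+* ℂ[X]).mapMatrix
  have h1 : φ U * φ (star U) = 1 := by
    rw [← _root_.map_mul, mem_unitaryGroup_iff.mp hU, _root_.map_one]
  have h2 : φ (star U) * φ U = 1 := by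
    rw [← _root_.map_mul, mem_unitaryGroup_iff'.mp hU, _root_.map_one]
  have hc : charmatrix (U * M * star U) = φ U * charmatrix M * φ (star U) := by
    unfold Matrix.charmatrix
    rw [_root_.map_mul, _root_.map_mul, Matrix.mul_sub, Matrix.sub_mul]
    congr 1
    · rw [Matrix.mul_assoc]
      rw [scalar_commute (X : ℂ[X]) (fun M => by ext; simp [Matrix.smul_apply, mul_comm]) (φ (star U))]
      rw [← Matrix.mul_assoc, h1, Matrix.one_mul]
  have := congrArg Matrix.det hc
  rw [Matrix.charpoly, Matrix.charpoly, hc, Matrix.det_mul, Matrix.det_mul, mul_comm,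
    ← mul_assoc, ← Matrix.det_mul, h2, Matrix.det_one, one_mul]

lemma charpoly_diagonal' {n : Type*} [Fintype n] [DecidableEq n] (v : n → ℂ) :
    (Matrix.diagonal v).charpoly = ∏ i, (X - C (v i)) := by
  have : charmatrix (Matrix.diagonal v) = Matrix.diagonal (fun i => X - C (v i)) := by
    ext i j
    by_cases h : i = j
    · subst h; simp [charmatrix_apply_eq]
    · simp [charmatrix_apply_ne _ _ _ h, Matrix.diagonal_apply_ne _ h,
        Matrix.diagonal_apply_ne' _ (Ne.symm h)]
  rw [Matrix.charpoly, this, Matrix.det_diagonal]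

lemma charpoly_eq_prod {d : ℕ} {A : Matrix (Fin d) (Fin d) ℂ}
    (U : Matrix (Fin d) (Fin d) ℂ) (hU : U ∈ Matrix.unitaryGroup (Fin d) ℂ) (v : Fin d → ℝ)
    (hAU : A = U * Matrix.diagonal (fun i => (v i : ℂ)) * star U) :
    A.charpoly = ∏ i, (X - C ((v i : ℂ))) := by
  rw [hAU, charpoly_unitary_conj _ _ hU, charpoly_diagonal']

lemma roots_key {d : ℕ} (f : Fin d → ℝ) :
    (∏ i, (X - C ((f i : ℂ)))).roots =
      Multiset.map (fun i => ((f i : ℝ) : ℂ)) Finset.univ.val := by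
  rw [Finset.prod_eq_multiset_prod]
  have h := roots_multiset_prod_X_sub_C
    (Multiset.map (fun i => ((f i : ℝ) : ℂ)) Finset.univ.val)
  rw [Multiset.map_map] at h
  exact h

lemma eig_multiset {d : ℕ} {A : Matrix (Fin d) (Fin d) ℂ} (hA : A.IsHermitian)
    (U : Matrix (Fin d) (Fin d) ℂ) (hU : U ∈ Matrix.unitaryGroup (Fin d) ℂ) (v : Fin d → ℝ)
    (hAU : A = U * Matrix.diagonal (fun i => (v i : ℂ)) * star U) :
    Multiset.map hA.eigenvalues Finset.univ.val = Multiset.map v Finset.univ.val := by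
  have h1 := charpoly_eq_prod U hU v hAU
  have h2 : A.charpoly = ∏ i, (X - C ((hA.eigenvalues i : ℂ))) :=
    charpoly_eq_prod _ (hA.eigenvectorUnitary).2 hA.eigenvalues hA.spectral_theorem
  have h4 : Multiset.map (fun i => ((hA.eigenvalues i : ℝ) : ℂ)) Finset.univ.val
      = Multiset.map (fun i => ((v i : ℝ) : ℂ)) Finset.univ.val := by
    rw [← roots_key, ← roots_key, ← h1, ← h2]
  rw [show (fun i => ((hA.eigenvalues i : ℝ) : ℂ)) = (fun x : ℝ => (x : ℂ)) ∘ hA.eigenvalues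
      from rfl,
    show (fun i => ((v i : ℝ) : ℂ)) = (fun x : ℝ => (x : ℂ)) ∘ v from rfl,
    ← Multiset.map_map, ← Multiset.map_map] at h4
  exact Multiset.map_injective Complex.ofReal_injective h4

lemma eig_sum_transfer {d : ℕ} {A : Matrix (Fin d) (Fin d) ℂ} (hA : A.IsHermitian)
    (U : Matrix (Fin d) (Fin d) ℂ) (hU : U ∈ Matrix.unitaryGroup (Fin d) ℂ) (v : Fin d → ℝ)
    (hAU : A = U * Matrix.diagonal (fun i => (v i : ℂ)) * star U) (f : ℝ → ℝ) :
    ∑ i, f (hA.eigenvalues i) = ∑ i, f (v i) := by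
  have h := eig_multiset hA U hU v hAU
  rw [Finset.sum_eq_multiset_sum, Finset.sum_eq_multiset_sum,
    show (fun i => f (hA.eigenvalues i)) = f ∘ hA.eigenvalues from rfl,
    show (fun i => f (v i)) = f ∘ v from rfl, ← Multiset.map_map, ← Multiset.map_map, h]

lemma eig_exists_transfer {d : ℕ} {A : Matrix (Fin d) (Fin d) ℂ} (hA : A.IsHermitian)
    (U : Matrix (Fin d) (Fin d) ℂ) (hU : U ∈ Matrix.unitaryGroup (Fin d) ℂ) (v : Fin d → ℝ)
    (hAU : A = U * Matrix.diagonal (fun i => (v i : ℂ)) * star U) (j : Fin d) :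
    ∃ i, hA.eigenvalues i = v j := by
  have h := eig_multiset hA U hU v hAU
  have : v j ∈ Multiset.map v Finset.univ.val :=
    Multiset.mem_map.mpr ⟨j, by simp, rfl⟩
  rw [← h] at this
  obtain ⟨i, -, hi⟩ := Multiset.mem_map.mp this
  exact ⟨i, hi⟩

lemma eig_exists_transfer' {d : ℕ} {A : Matrix (Fin d) (Fin d) ℂ} (hA : A.IsHermitian)
    (U : Matrix (Fin d) (Fin d) ℂ) (hU : U ∈ Matrix.unitaryGroup (Fin d) ℂ) (v : Fin d → ℝ)
    (hAU : A = U * Matrix.diagonal (fun i => (v i : ℂ)) * star U) (i : Fin d) :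
    ∃ j, v j = hA.eigenvalues i := by
  have h := eig_multiset hA U hU v hAU
  have : hA.eigenvalues i ∈ Multiset.map hA.eigenvalues Finset.univ.val :=
    Multiset.mem_map.mpr ⟨i, by simp, rfl⟩
  rw [h] at this
  obtain ⟨j, -, hj⟩ := Multiset.mem_map.mp this
  exact ⟨j, hj⟩

variable {d : ℕ}

lemma mpow_eq {A : Matrix (Fin d) (Fin d) ℂ} (hA : A.IsHermitian) (r : ℝ) :
    mpow A r = (hA.eigenvectorUnitary : Matrix (Fin d) (Fin d) ℂ) *
      Matrix.diagonal (fun i => ((hA.eigenvalues i ^ r : ℝ) : ℂ)) *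
      star (hA.eigenvectorUnitary : Matrix (Fin d) (Fin d) ℂ) := dif_pos hA

lemma unitary_conj_mul {U D1 D2 : Matrix (Fin d) (Fin d) ℂ}
    (hU : U ∈ Matrix.unitaryGroup (Fin d) ℂ) :
    (U * D1 * star U) * (U * D2 * star U) = U * (D1 * D2) * star U := by
  have h1 : star U * U = 1 := mem_unitaryGroup_iff'.mp hU
  simp only [Matrix.mul_assoc]
  rw [← Matrix.mul_assoc (star U) U, h1, Matrix.one_mul]

lemma mpow_mul_mpow {A : Matrix (Fin d) (Fin d) ℂ} (hA : A.PosDef) (a b : ℝ) :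
    mpow A a * mpow A b = mpow A (a + b) := by
  rw [mpow_eq hA.1, mpow_eq hA.1, mpow_eq hA.1, unitary_conj_mul hA.1.eigenvectorUnitary.2,
    Matrix.diagonal_mul_diagonal]
  have h : (fun i => ((hA.1.eigenvalues i ^ a : ℝ) : ℂ) * ((hA.1.eigenvalues i ^ b : ℝ) : ℂ))
      = fun i => ((hA.1.eigenvalues i ^ (a + b) : ℝ) : ℂ) := by
    funext i
    rw [← Complex.ofReal_mul, ← Real.rpow_add (hA.eigenvalues_pos i)]
  rw [h]

lemma mpow_zero {A : Matrix (Fin d) (Fin d) ℂ} (hA : A.IsHermitian) : mpow A 0 = 1 := by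
  rw [mpow_eq hA]
  simp only [Real.rpow_zero, Complex.ofReal_one, Matrix.diagonal_one, Matrix.mul_one]
  exact mem_unitaryGroup_iff.mp hA.eigenvectorUnitary.2

lemma mpow_one {A : Matrix (Fin d) (Fin d) ℂ} (hA : A.IsHermitian) : mpow A 1 = A := by
  rw [mpow_eq hA]
  simp only [Real.rpow_one]
  exact hA.spectral_theorem.symm

lemma mpow_isHermitian {A : Matrix (Fin d) (Fin d) ℂ} (hA : A.IsHermitian) (r : ℝ) :
    (mpow A r).IsHermitian := by
  rw [mpow_eq hA, Matrix.star_eq_conjTranspose]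
  exact isHermitian_mul_mul_conjTranspose _
    (isHermitian_diagonal_of_self_adjoint _ (funext fun i => Complex.conj_ofReal _))

lemma posDef_unitary_conj {U M : Matrix (Fin d) (Fin d) ℂ} (hM : M.PosDef)
    (hU : U ∈ Matrix.unitaryGroup (Fin d) ℂ) : (U * M * star U).PosDef := by
  refine Matrix.PosDef.of_dotProduct_mulVec_pos ?_ ?_
  · rw [Matrix.star_eq_conjTranspose]
    exact isHermitian_mul_mul_conjTranspose _ hM.1
  · intro x hx
    have hy : star U *ᵥ x ≠ 0 := by
      intro h
      apply hx
      have := congrArg (fun v => U *ᵥ v) h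
      simpa [Matrix.mulVec_mulVec, mem_unitaryGroup_iff.mp hU] using this
    have := hM.dotProduct_mulVec_pos hy
    simpa only [Matrix.star_eq_conjTranspose, Matrix.star_mulVec, Matrix.dotProduct_mulVec,
      Matrix.vecMul_vecMul, Matrix.conjTranspose_conjTranspose, Matrix.mul_assoc,
      Matrix.mulVec_mulVec] using this

lemma mpow_posDef {A : Matrix (Fin d) (Fin d) ℂ} (hA : A.PosDef) (r : ℝ) :
    (mpow A r).PosDef := by
  rw [mpow_eq hA.1]
  exact posDef_unitary_conj
    (Matrix.PosDef.diagonal fun i => by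
      exact_mod_cast Complex.zero_lt_real.mpr (Real.rpow_pos_of_pos (hA.eigenvalues_pos i) r))
    hA.1.eigenvectorUnitary.2

lemma sq_spec {B : Matrix (Fin d) (Fin d) ℂ} (hB : B.PosSemidef) :
    Bᴴ * B = (hB.1.eigenvectorUnitary : Matrix (Fin d) (Fin d) ℂ) *
      Matrix.diagonal (fun i => ((hB.1.eigenvalues i ^ 2 : ℝ) : ℂ)) *
      star (hB.1.eigenvectorUnitary : Matrix (Fin d) (Fin d) ℂ) := by
  rw [hB.1]
  conv_lhs => rw [hB.1.spectral_theorem, Unitary.conjStarAlgAut_apply]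
  rw [unitary_conj_mul hB.1.eigenvectorUnitary.2, Matrix.diagonal_mul_diagonal]
  have h : (fun i => (RCLike.ofReal ∘ hB.1.eigenvalues) i * (RCLike.ofReal ∘ hB.1.eigenvalues) i :
      Fin d → ℂ) = fun i => ((hB.1.eigenvalues i ^ 2 : ℝ) : ℂ) := by
    funext i
    show (↑(hB.1.eigenvalues i) * ↑(hB.1.eigenvalues i) : ℂ) = _
    push_cast
    ring
  rw [h]

lemma sNorm_inf_eq (X : Matrix (Fin d) (Fin d) ℂ) :
    sNorm ∞ X = ⨆ i, Real.sqrt (((Matrix.posSemidef_conjTranspose_mul_self X).1).eigenvalues i) :=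
  if_pos rfl

lemma le_sNorm_inf {B : Matrix (Fin d) (Fin d) ℂ} (hB : B.PosSemidef) (j : Fin d) :
    hB.1.eigenvalues j ≤ sNorm ∞ B := by
  obtain ⟨i, hi⟩ := eig_exists_transfer (Matrix.posSemidef_conjTranspose_mul_self B).1
    _ hB.1.eigenvectorUnitary.2 (fun i => hB.1.eigenvalues i ^ 2) (sq_spec hB) j
  rw [sNorm_inf_eq]
  calc hB.1.eigenvalues j = Real.sqrt (hB.1.eigenvalues j ^ 2) :=
        (Real.sqrt_sq (hB.eigenvalues_nonneg j)).symm
    _ = Real.sqrt ((Matrix.posSemidef_conjTranspose_mul_self B).1.eigenvalues i) := by rw [hi]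
    _ ≤ _ := le_ciSup (f := fun i =>
          Real.sqrt ((Matrix.posSemidef_conjTranspose_mul_self B).1.eigenvalues i))
          (Set.Finite.bddAbove (Set.finite_range _)) i

lemma sNorm_inf_le {B : Matrix (Fin d) (Fin d) ℂ} [Nonempty (Fin d)] (hB : B.PosSemidef)
    {c : ℝ} (hc : ∀ j, hB.1.eigenvalues j ≤ c) : sNorm ∞ B ≤ c := by
  rw [sNorm_inf_eq]
  refine ciSup_le fun i => ?_
  obtain ⟨j, hj⟩ := eig_exists_transfer' (Matrix.posSemidef_conjTranspose_mul_self B).1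
    _ hB.1.eigenvectorUnitary.2 (fun i => hB.1.eigenvalues i ^ 2) (sq_spec hB) i
  rw [← hj, Real.sqrt_sq (hB.eigenvalues_nonneg j)]
  exact hc j

lemma sNorm_nonneg {a b : Type*} [Fintype a] [Fintype b] [DecidableEq b] (p : ℝ≥0∞)
    (X : Matrix a b ℂ) : 0 ≤ sNorm p X := by
  unfold sNorm
  split
  · exact Real.iSup_nonneg fun i => Real.sqrt_nonneg _
  · exact Real.rpow_nonneg (Finset.sum_nonneg fun i _ => Real.rpow_nonneg
      ((Matrix.posSemidef_conjTranspose_mul_self X).eigenvalues_nonneg i) _) _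

lemma psd_smul {M : Matrix (Fin d) (Fin d) ℂ} (hM : M.PosSemidef) {c : ℝ} (hc : 0 ≤ c) :
    (((c : ℝ) : ℂ) • M).PosSemidef := by
  refine Matrix.PosSemidef.of_dotProduct_mulVec_nonneg ?_ ?_
  · rw [Matrix.IsHermitian, Matrix.conjTranspose_smul, hM.1, Complex.star_def,
      Complex.conj_ofReal]
  · intro x
    rw [Matrix.smul_mulVec, dotProduct_smul]
    exact smul_nonneg (Complex.zero_le_real.mpr hc) (hM.dotProduct_mulVec_nonneg x)

lemma psd_trace_nonneg {M : Matrix (Fin d) (Fin d) ℂ} (hM : M.PosSemidef) :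
    0 ≤ M.trace := by
  rw [Matrix.trace]
  refine Finset.sum_nonneg fun i _ => ?_
  have := hM.dotProduct_mulVec_nonneg (Pi.single i 1)
  simpa [Matrix.mulVec_single, dotProduct, Pi.single_apply, Finset.sum_ite_eq] using this

lemma smul_one_conj {U : Matrix (Fin d) (Fin d) ℂ} (hU : U ∈ Matrix.unitaryGroup (Fin d) ℂ)
    (z : ℂ) : U * (z • 1) * star U = z • 1 := by
  rw [Matrix.mul_smul, Matrix.mul_one, Matrix.smul_mul, mem_unitaryGroup_iff.mp hU]

lemma psd_smul_one_sub {A : Matrix (Fin d) (Fin d) ℂ} (hA : A.IsHermitian) {c : ℝ}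
    (hub : ∀ j, hA.eigenvalues j ≤ c) : (((c : ℝ) : ℂ) • 1 - A).PosSemidef := by
  have key : ((c : ℂ) • 1 - A : Matrix (Fin d) (Fin d) ℂ)
      = (hA.eigenvectorUnitary : Matrix (Fin d) (Fin d) ℂ) *
        Matrix.diagonal (fun i => ((c - hA.eigenvalues i : ℝ) : ℂ)) *
        star (hA.eigenvectorUnitary : Matrix (Fin d) (Fin d) ℂ) := by
    conv_lhs => rw [hA.spectral_theorem, Unitary.conjStarAlgAut_apply, ← smul_one_conj hA.eigenvectorUnitary.2 (c : ℂ)]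
    rw [← Matrix.sub_mul, ← Matrix.mul_sub, Matrix.smul_one_eq_diagonal, Matrix.diagonal_sub]
    have hfun : (fun i => ((c : ℂ)) - (RCLike.ofReal ∘ hA.eigenvalues) i)
        = fun i => ((c - hA.eigenvalues i : ℝ) : ℂ) := by
      funext i
      show (c : ℂ) - ((hA.eigenvalues i : ℝ) : ℂ) = _
      push_cast
      ring
    rw [hfun]
  rw [key, Matrix.star_eq_conjTranspose]
  exact (Matrix.PosSemidef.diagonal fun i =>
    Complex.zero_le_real.mpr (sub_nonneg.mpr (hub i))).mul_mul_conjTranspose_same _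

lemma eig_le_of_psd_smul_one_sub {A : Matrix (Fin d) (Fin d) ℂ} (hA : A.IsHermitian) {c : ℝ}
    (h : (((c : ℝ) : ℂ) • 1 - A).PosSemidef) (j : Fin d) : hA.eigenvalues j ≤ c := by
  set v := ⇑(hA.eigenvectorBasis j) with hvdef
  have hv : A *ᵥ v = (hA.eigenvalues j : ℂ) • v := by
    rw [hA.mulVec_eigenvectorBasis j, RCLike.real_smul_eq_coe_smul (K := ℂ)]
    rfl
  have hn : dotProduct (star v) v = 1 := by
    have h1 : ‖hA.eigenvectorBasis j‖ = 1 := hA.eigenvectorBasis.orthonormal.1 j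
    have h2 := EuclideanSpace.inner_eq_star_dotProduct (hA.eigenvectorBasis j)
      (hA.eigenvectorBasis j)
    rw [inner_self_eq_norm_sq_to_K, h1] at h2
    rw [dotProduct_comm]
    simpa using h2.symm
  have h2 := h.dotProduct_mulVec_nonneg v
  rw [Matrix.sub_mulVec, Matrix.smul_mulVec, Matrix.one_mulVec, hv,
    dotProduct_sub] at h2
  simp only [dotProduct_smul, hn, smul_eq_mul, mul_one] at h2
  rw [sub_nonneg] at h2
  exact_mod_cast Complex.real_le_real.mp h2

lemma trace_unitary_conj_diag {U : Matrix (Fin d) (Fin d) ℂ}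
    (hU : U ∈ Matrix.unitaryGroup (Fin d) ℂ) (v : Fin d → ℝ) :
    (U * Matrix.diagonal (fun i => (v i : ℂ)) * star U).trace = ((∑ i, v i : ℝ) : ℂ) := by
  rw [Matrix.trace_mul_cycle, mem_unitaryGroup_iff'.mp hU, Matrix.one_mul,
    Matrix.trace_diagonal]
  push_cast
  rfl

lemma trace_mpow {A : Matrix (Fin d) (Fin d) ℂ} (hA : A.IsHermitian) (r : ℝ) :
    (mpow A r).trace = ((∑ i, hA.eigenvalues i ^ r : ℝ) : ℂ) := by
  rw [mpow_eq hA]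
  exact trace_unitary_conj_diag hA.eigenvectorUnitary.2 _

lemma trace_hermitian {A : Matrix (Fin d) (Fin d) ℂ} (hA : A.IsHermitian) :
    A.trace = ((∑ i, hA.eigenvalues i : ℝ) : ℂ) := by
  conv_lhs => rw [hA.spectral_theorem]
  exact trace_unitary_conj_diag hA.eigenvectorUnitary.2 hA.eigenvalues

lemma spectral' {A : Matrix (Fin d) (Fin d) ℂ} (hA : A.IsHermitian) :
    A = (hA.eigenvectorUnitary : Matrix (Fin d) (Fin d) ℂ) *
      Matrix.diagonal (fun i => ((hA.eigenvalues i : ℝ) : ℂ)) *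
      star (hA.eigenvectorUnitary : Matrix (Fin d) (Fin d) ℂ) := hA.spectral_theorem

lemma trace_unitary_conj {U X : Matrix (Fin d) (Fin d) ℂ}
    (hU : U ∈ Matrix.unitaryGroup (Fin d) ℂ) : (U * X * star U).trace = X.trace := by
  rw [Matrix.trace_mul_cycle, mem_unitaryGroup_iff'.mp hU, Matrix.one_mul]

lemma unitary_row_sum {W : Matrix (Fin d) (Fin d) ℂ} (hW : W ∈ Matrix.unitaryGroup (Fin d) ℂ)
    (i : Fin d) : ∑ j, Complex.normSq (W i j) = 1 := by
  have h := congrArg (fun M : Matrix (Fin d) (Fin d) ℂ => M i i) (mem_unitaryGroup_iff.mp hW)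
  simp only [Matrix.mul_apply, Matrix.star_apply, Matrix.one_apply_eq, Complex.star_def,
    Complex.mul_conj] at h
  exact_mod_cast h

lemma unitary_col_sum {W : Matrix (Fin d) (Fin d) ℂ} (hW : W ∈ Matrix.unitaryGroup (Fin d) ℂ)
    (j : Fin d) : ∑ i, Complex.normSq (W i j) = 1 := by
  have h := congrArg (fun M : Matrix (Fin d) (Fin d) ℂ => M j j) (mem_unitaryGroup_iff'.mp hW)
  simp only [Matrix.mul_apply, Matrix.star_apply, Matrix.one_apply_eq, Complex.star_def] at h
  have h2 : ∀ i : Fin d, (starRingEnd ℂ) (W i j) * W i j = ((Complex.normSq (W i j) : ℝ) : ℂ) := by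
    intro i
    rw [mul_comm, Complex.mul_conj]
  simp only [h2] at h
  exact_mod_cast h

lemma trace_conj_diag_mul {U V : Matrix (Fin d) (Fin d) ℂ}
    (hU : U ∈ Matrix.unitaryGroup (Fin d) ℂ) (hV : V ∈ Matrix.unitaryGroup (Fin d) ℂ)
    (f g : Fin d → ℝ) :
    ((U * Matrix.diagonal (fun i => (f i : ℂ)) * star U) *
      (V * Matrix.diagonal (fun i => (g i : ℂ)) * star V)).trace
    = ((∑ i, ∑ j, f i * g j * Complex.normSq ((star U * V) i j) : ℝ) : ℂ) := by
  set Df := Matrix.diagonal (fun i => (f i : ℂ))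
  set Dg := Matrix.diagonal (fun i => (g i : ℂ))
  set W := star U * V with hW
  have h1 : U * star U = 1 := mem_unitaryGroup_iff.mp hU
  have key : (U * Df * star U) * (V * Dg * star V) = U * (Df * W * Dg * star W) * star U := by
    rw [hW, StarMul.star_mul, star_star]
    simp only [Matrix.mul_assoc]
    rw [h1, Matrix.mul_one]
  rw [key, trace_unitary_conj hU]
  have hdiag : ∀ i, (Df * W * Dg * star W) i i
      = ∑ j, ((f i * g j * Complex.normSq (W i j) : ℝ) : ℂ) := by
    intro i
    rw [Matrix.mul_apply]
    refine Finset.sum_congr rfl fun j _ => ?_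
    rw [Matrix.mul_diagonal, Matrix.diagonal_mul, Matrix.star_apply, Complex.star_def]
    calc (↑(f i) * W i j * ↑(g j)) * (starRingEnd ℂ) (W i j)
        = (↑(f i) * ↑(g j) : ℂ) * (W i j * (starRingEnd ℂ) (W i j)) := by ring
      _ = _ := by rw [Complex.mul_conj]; push_cast; ring
  have htr2 : (Df * W * Dg * star W).trace
      = ∑ i, ∑ j, ((f i * g j * Complex.normSq (W i j) : ℝ) : ℂ) := by
    rw [Matrix.trace]
    exact Finset.sum_congr rfl fun i _ => hdiag i
  rw [htr2]
  push_cast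
  rfl

lemma holder_core {A B : Matrix (Fin d) (Fin d) ℂ} (hA : A.PosDef) (hB : B.PosDef)
    {p : ℝ} (hp : 1 < p) :
    ((mpow A (p - 1)) * B).trace.re ≤
      (∑ i, hA.1.eigenvalues i ^ p) ^ (1 - 1/p) * (∑ i, hB.1.eigenvalues i ^ p) ^ (1/p) := by
  set q := Real.conjExponent p with hqdef
  have hpq : p.HolderConjugate q := Real.HolderConjugate.conjExponent hp
  set a := hA.1.eigenvalues
  set b := hB.1.eigenvalues
  set U := (hA.1.eigenvectorUnitary : Matrix (Fin d) (Fin d) ℂ)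
  set V := (hB.1.eigenvectorUnitary : Matrix (Fin d) (Fin d) ℂ)
  set W := star U * V with hWdef
  have hWmem : W ∈ Matrix.unitaryGroup (Fin d) ℂ :=
    Submonoid.mul_mem _ (Unitary.star_mem hA.1.eigenvectorUnitary.2) hB.1.eigenvectorUnitary.2
  set w : Fin d → Fin d → ℝ := fun i j => Complex.normSq (W i j) with hwdef
  have htr : ((mpow A (p - 1)) * B).trace = ((∑ i, ∑ j, a i ^ (p-1) * b j * w i j : ℝ) : ℂ) := by
    rw [mpow_eq hA.1]
    conv_lhs => rw [spectral' hB.1]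
    exact trace_conj_diag_mul hA.1.eigenvectorUnitary.2 hB.1.eigenvectorUnitary.2 _ _
  rw [htr, Complex.ofReal_re]
  have ha : ∀ i, (0:ℝ) < a i := fun i => hA.eigenvalues_pos i
  have hb : ∀ i, (0:ℝ) < b i := fun i => hB.eigenvalues_pos i
  have hw : ∀ i j, (0:ℝ) ≤ w i j := fun i j => Complex.normSq_nonneg _
  set F : Fin d × Fin d → ℝ := fun x => a x.1 ^ (p-1) * w x.1 x.2 ^ (1/q) with hF
  set G : Fin d × Fin d → ℝ := fun x => b x.2 * w x.1 x.2 ^ (1/p) with hG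
  have hco : 1/q + 1/p = 1 := by
    rw [one_div, one_div, add_comm]
    exact hpq.inv_add_inv_eq_one
  have hFG : ∀ x : Fin d × Fin d, F x * G x = a x.1 ^ (p-1) * b x.2 * w x.1 x.2 := by
    intro x
    have hww : w x.1 x.2 ^ (1/q) * w x.1 x.2 ^ (1/p) = w x.1 x.2 := by
      rw [← Real.rpow_add' (hw _ _) (by rw [hco]; norm_num), hco, Real.rpow_one]
    calc F x * G x = (a x.1 ^ (p-1) * b x.2) * (w x.1 x.2 ^ (1/q) * w x.1 x.2 ^ (1/p)) := by
          rw [hF, hG]; ring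
      _ = _ := by rw [hww]
  have hFq : ∑ x : Fin d × Fin d, F x ^ q = ∑ i, a i ^ p := by
    have hFx : ∀ x : Fin d × Fin d, F x ^ q = a x.1 ^ p * w x.1 x.2 := by
      intro x
      rw [hF, Real.mul_rpow (Real.rpow_nonneg (ha _).le _) (Real.rpow_nonneg (hw _ _) _),
        ← Real.rpow_mul (ha _).le, ← Real.rpow_mul (hw _ _), hpq.sub_one_mul_conj,
        one_div, inv_mul_cancel₀ hpq.symm.ne_zero, Real.rpow_one]
    simp only [hFx]
    rw [Fintype.sum_prod_type]
    refine Finset.sum_congr rfl fun i _ => ?_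
    show ∑ y, a i ^ p * w i y = a i ^ p
    rw [← Finset.mul_sum, hwdef, unitary_row_sum hWmem i, mul_one]
  have hGp : ∑ x : Fin d × Fin d, G x ^ p = ∑ j, b j ^ p := by
    have hGx : ∀ x : Fin d × Fin d, G x ^ p = b x.2 ^ p * w x.1 x.2 := by
      intro x
      rw [hG, Real.mul_rpow (hb _).le (Real.rpow_nonneg (hw _ _) _),
        ← Real.rpow_mul (hw _ _), one_div, inv_mul_cancel₀ hpq.ne_zero, Real.rpow_one]
    simp only [hGx]
    rw [Fintype.sum_prod_type, Finset.sum_comm]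
    refine Finset.sum_congr rfl fun j _ => ?_
    show ∑ i, b j ^ p * w i j = b j ^ p
    rw [← Finset.mul_sum, hwdef, unitary_col_sum hWmem j, mul_one]
  have hH := Real.inner_le_Lp_mul_Lq_of_nonneg (s := Finset.univ) (f := F) (g := G) hpq.symm
    (fun x _ => mul_nonneg (Real.rpow_nonneg (ha _).le _) (Real.rpow_nonneg (hw _ _) _))
    (fun x _ => mul_nonneg (hb _).le (Real.rpow_nonneg (hw _ _) _))
  calc ∑ i, ∑ j, a i ^ (p-1) * b j * w i j
      = ∑ x : Fin d × Fin d, F x * G x := by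
        rw [Fintype.sum_prod_type]
        exact (Finset.sum_congr rfl fun i _ => Finset.sum_congr rfl fun j _ =>
          (hFG (i, j)).symm)
    _ ≤ (∑ x : Fin d × Fin d, F x ^ q) ^ (1/q) * (∑ x : Fin d × Fin d, G x ^ p) ^ (1/p) := hH
    _ = _ := by
        rw [hFq, hGp, show (1:ℝ)/q = 1 - 1/p by rw [one_div, one_div, ← hpq.one_sub_inv]]

lemma sum_eig_rpow_le {A B : Matrix (Fin d) (Fin d) ℂ} (hA : A.PosDef) (hB : B.PosDef)
    (hAB : (B - A).PosSemidef) {p : ℝ} (hp : 1 ≤ p) :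
    ∑ i, hA.1.eigenvalues i ^ p ≤ ∑ i, hB.1.eigenvalues i ^ p := by
  rcases isEmpty_or_nonempty (Fin d) with hE | hE
  · simp
  rcases eq_or_lt_of_le hp with hp1 | hp1
  · rw [← hp1]
    simp only [Real.rpow_one]
    have h1 := psd_trace_nonneg hAB
    rw [Matrix.trace_sub, sub_nonneg, trace_hermitian hA.1, trace_hermitian hB.1] at h1
    exact Complex.real_le_real.mp h1
  · set a := hA.1.eigenvalues
    set b := hB.1.eigenvalues
    set x := ∑ i, a i ^ p with hxdef
    set y := ∑ i, b i ^ p with hydef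
    have hx : 0 < x := Finset.sum_pos
      (fun i _ => Real.rpow_pos_of_pos (hA.eigenvalues_pos i) p) Finset.univ_nonempty
    have hy : 0 < y := Finset.sum_pos
      (fun i _ => Real.rpow_pos_of_pos (hB.eigenvalues_pos i) p) Finset.univ_nonempty
    have e1 : mpow A (p - 1) * A = mpow A p := by
      have h0 := mpow_mul_mpow hA (p - 1) 1
      rw [mpow_one hA.1, sub_add_cancel] at h0
      exact h0
    have e2 : (mpow A p).trace = ((x : ℝ) : ℂ) := trace_mpow hA.1 p
    set S := mpow A ((p - 1) / 2) with hSdef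
    have hP : S * S = mpow A (p - 1) := by
      rw [hSdef, mpow_mul_mpow hA]
      ring_nf
    have hmono : (mpow A (p - 1) * A).trace ≤ (mpow A (p - 1) * B).trace := by
      rw [← sub_nonneg, ← Matrix.trace_sub, ← Matrix.mul_sub]
      have h3 : (mpow A (p - 1) * (B - A)).trace = (S * (B - A) * S).trace := by
        rw [← hP, Matrix.mul_assoc, Matrix.trace_mul_comm]
      have h4 : (S * (B - A) * S).PosSemidef := by
        have h5 := hAB.conjTranspose_mul_mul_same S
        rwa [show Sᴴ = S from mpow_isHermitian hA.1 _] at h5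
      rw [h3]
      exact psd_trace_nonneg h4
    have h6 : x ≤ ((mpow A (p - 1) * B)).trace.re := by
      have h7 : ((x : ℝ) : ℂ) ≤ (mpow A (p - 1) * B).trace := by
        rw [← e2, ← e1]
        exact hmono
      simpa using (Complex.le_def.mp h7).1
    have h7 : x ≤ x ^ (1 - 1/p) * y ^ (1/p) := h6.trans (holder_core hA hB hp1)
    have hxeq : x ^ (1 - 1/p) * x ^ (1/p) = x := by
      rw [← Real.rpow_add hx, sub_add_cancel, Real.rpow_one]
    have h8 : x ^ (1/p) ≤ y ^ (1/p) := by
      refine le_of_mul_le_mul_left ?_ (Real.rpow_pos_of_pos hx (1 - 1/p))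
      calc x ^ (1 - 1/p) * x ^ (1/p) = x := hxeq
        _ ≤ x ^ (1 - 1/p) * y ^ (1/p) := h7
    have h9 := Real.rpow_le_rpow (Real.rpow_nonneg hx.le _) h8
      (le_of_lt (lt_trans one_pos hp1))
    rwa [← Real.rpow_mul hx.le, ← Real.rpow_mul hy.le, one_div,
      inv_mul_cancel₀ (ne_of_gt (lt_trans one_pos hp1)), Real.rpow_one, Real.rpow_one] at h9

lemma sNorm_fin_eq {q : ℝ≥0∞} (hq : q ≠ ∞) {B : Matrix (Fin d) (Fin d) ℂ} (hB : B.PosSemidef) :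
    sNorm q B = (∑ i, hB.1.eigenvalues i ^ q.toReal) ^ (1 / q.toReal) := by
  unfold sNorm
  rw [if_neg hq]
  congr 1
  have h := eig_sum_transfer (Matrix.posSemidef_conjTranspose_mul_self B).1 _
    hB.1.eigenvectorUnitary.2 (fun i => hB.1.eigenvalues i ^ 2) (sq_spec hB)
    (fun t => t ^ (q.toReal / 2))
  rw [h]
  refine Finset.sum_congr rfl fun i _ => ?_
  rw [← Real.rpow_natCast (hB.1.eigenvalues i) 2, ← Real.rpow_mul (hB.eigenvalues_nonneg i)]
  congr 1
  push_cast
  ring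

lemma posDef_smul {B : Matrix (Fin d) (Fin d) ℂ} (hB : B.PosDef) {c : ℝ} (hc : 0 < c) :
    (((c : ℝ) : ℂ) • B).PosDef := by
  refine Matrix.PosDef.of_dotProduct_mulVec_pos (psd_smul hB.posSemidef hc.le).1 fun x hx => ?_
  rw [Matrix.smul_mulVec, dotProduct_smul, smul_eq_mul]
  exact mul_pos (Complex.zero_lt_real.mpr hc) (hB.dotProduct_mulVec_pos hx)

lemma smul_spec {B : Matrix (Fin d) (Fin d) ℂ} (hB : B.PosDef) (c : ℝ) :
    ((c : ℂ) • B) = (hB.1.eigenvectorUnitary : Matrix (Fin d) (Fin d) ℂ) *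
      Matrix.diagonal (fun i => ((c * hB.1.eigenvalues i : ℝ) : ℂ)) *
      star (hB.1.eigenvectorUnitary : Matrix (Fin d) (Fin d) ℂ) := by
  have hd : ((c : ℂ)) • Matrix.diagonal (fun i => ((hB.1.eigenvalues i : ℝ) : ℂ))
      = Matrix.diagonal (fun i => ((c * hB.1.eigenvalues i : ℝ) : ℂ)) := by
    ext i j
    rcases eq_or_ne i j with rfl | hij
    · simp [Matrix.smul_apply, Matrix.diagonal_apply_eq, smul_eq_mul]
    · simp [Matrix.smul_apply, Matrix.diagonal_apply_ne _ hij]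
  conv_lhs => rw [spectral' hB.1]
  rw [← Matrix.smul_mul, ← Matrix.mul_smul, hd]

lemma sNorm_le_of_psd_sub [Nonempty (Fin d)] {A B : Matrix (Fin d) (Fin d) ℂ}
    (hA : A.PosDef) (hB : B.PosDef) {c : ℝ} (hc : 0 < c)
    (h : (((c : ℝ) : ℂ) • B - A).PosSemidef) {q : ℝ≥0∞} (hq : 1 ≤ q) :
    sNorm q A ≤ c * sNorm q B := by
  by_cases hqtop : q = ∞
  · subst hqtop
    set sB := sNorm ∞ B with hsB
    have hsB0 : 0 ≤ sB := sNorm_nonneg _ _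
    have h1 : (((c * sB : ℝ) : ℂ) • 1 - A).PosSemidef := by
      have h2 := (psd_smul (psd_smul_one_sub hB.1
        (fun j => le_sNorm_inf hB.posSemidef j)) hc.le).add h
      have h3 : ((c : ℂ)) • (((sB : ℝ) : ℂ) • 1 - B) + (((c : ℝ) : ℂ) • B - A)
          = ((c * sB : ℝ) : ℂ) • 1 - A := by
        rw [smul_sub, smul_smul, Complex.ofReal_mul]
        abel
      rwa [h3] at h2
    exact sNorm_inf_le hA.posSemidef fun j => eig_le_of_psd_smul_one_sub hA.1 h1 j
  · have hp1 : 1 ≤ q.toReal := by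
      have := ENNReal.toReal_mono hqtop hq
      simpa using this
    have hp0 : 0 < q.toReal := lt_of_lt_of_le one_pos hp1
    have hcB : (((c : ℝ) : ℂ) • B).PosDef := posDef_smul hB hc
    have hmono := sum_eig_rpow_le hA hcB h hp1
    have htrans : ∑ i, hcB.1.eigenvalues i ^ q.toReal
        = c ^ q.toReal * ∑ i, hB.1.eigenvalues i ^ q.toReal := by
      rw [eig_sum_transfer hcB.1 _ hB.1.eigenvectorUnitary.2
        (fun i => c * hB.1.eigenvalues i) (smul_spec hB c) (fun t => t ^ q.toReal),
        Finset.mul_sum]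
      exact Finset.sum_congr rfl fun i _ =>
        Real.mul_rpow hc.le (hB.posSemidef.eigenvalues_nonneg i)
    rw [sNorm_fin_eq hqtop hA.posSemidef, sNorm_fin_eq hqtop hB.posSemidef]
    have h9 := Real.rpow_le_rpow (Finset.sum_nonneg fun i _ =>
      Real.rpow_nonneg (hA.posSemidef.eigenvalues_nonneg i) _)
      (hmono.trans_eq htrans) (le_of_lt (one_div_pos.mpr hp0))
    rw [Real.mul_rpow (Real.rpow_nonneg hc.le _) (Finset.sum_nonneg fun i _ =>
      Real.rpow_nonneg (hB.posSemidef.eigenvalues_nonneg i) _),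
      ← Real.rpow_mul hc.le, mul_one_div, div_self (ne_of_gt hp0), Real.rpow_one] at h9
    exact h9

lemma posDef_herm_conj {M P Q : Matrix (Fin d) (Fin d) ℂ} (hM : M.PosDef)
    (hPh : P.IsHermitian) (hQP : Q * P = 1) : (P * M * P).PosDef := by
  refine Matrix.PosDef.of_dotProduct_mulVec_pos ?_ ?_
  · have h2 : P * M * P = Pᴴ * M * P := by rw [hPh]
    rw [h2]
    exact isHermitian_conjTranspose_mul_mul _ hM.1
  · intro x hx
    have hPx : P *ᵥ x ≠ 0 := fun h0 => hx (by
      have h1 := congrArg (fun v => Q *ᵥ v) h0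
      simpa [Matrix.mulVec_mulVec, hQP] using h1)
    have h1 := hM.dotProduct_mulVec_pos hPx
    have h2 : P * M * P = Pᴴ * M * P := by rw [hPh]
    rw [h2]
    simpa only [Matrix.star_mulVec, Matrix.dotProduct_mulVec, Matrix.vecMul_vecMul] using h1


set_option maxHeartbeats 2000000 in
/-- positive definite operators with equal nonzero Schatten-`q` norms are
comparable up to the factor `exp(d_H(ρ,σ))`. -/
theorem le_exp_hilbert_metric_smul_of_eq_schatten_norm
    {d : ℕ} (ρ σ : Matrix (Fin d) (Fin d) ℂ) (hρ : ρ.PosDef) (hσ : σ.PosDef)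
    (q : ℝ≥0∞) (hq : 1 ≤ q) (hnorm : sNorm q ρ = sNorm q σ) (hne : sNorm q ρ ≠ 0) :
    (((Real.exp (dH ρ σ) : ℝ) : ℂ) • σ - ρ).PosSemidef ∧
    (((Real.exp (dH ρ σ) : ℝ) : ℂ) • ρ - σ).PosSemidef := by
  rcases Nat.eq_zero_or_pos d with hd | hd
  · subst hd
    have hz : ∀ (M : Matrix (Fin 0) (Fin 0) ℂ), M.PosSemidef := fun M =>
      Matrix.PosSemidef.of_dotProduct_mulVec_nonneg (by ext i j; exact i.elim0) fun x => by
        rw [dotProduct, Finset.univ_eq_empty, Finset.sum_empty]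
    exact ⟨hz _, hz _⟩
  haveI : Nonempty (Fin d) := ⟨⟨0, hd⟩⟩
  set j0 : Fin d := ⟨0, hd⟩
  set P := mpow ρ (-(1/2)) with hPdef
  set Q := mpow ρ (1/2) with hQdef
  set P2 := mpow σ (-(1/2)) with hP2def
  set Q2 := mpow σ (1/2) with hQ2def
  have hQP : Q * P = 1 := by
    rw [hQdef, hPdef, mpow_mul_mpow hρ, show (1/2 + -(1/2) : ℝ) = 0 by ring, mpow_zero hρ.1]
  have hPQ : P * Q = 1 := by
    rw [hQdef, hPdef, mpow_mul_mpow hρ, show (-(1/2) + 1/2 : ℝ) = 0 by ring, mpow_zero hρ.1]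
  have hQQ : Q * Q = ρ := by
    rw [hQdef, mpow_mul_mpow hρ, show (1/2 + 1/2 : ℝ) = 1 by ring, mpow_one hρ.1]
  have hQ2P2 : Q2 * P2 = 1 := by
    rw [hQ2def, hP2def, mpow_mul_mpow hσ, show (1/2 + -(1/2) : ℝ) = 0 by ring, mpow_zero hσ.1]
  have hP2Q2 : P2 * Q2 = 1 := by
    rw [hQ2def, hP2def, mpow_mul_mpow hσ, show (-(1/2) + 1/2 : ℝ) = 0 by ring, mpow_zero hσ.1]
  have hQ2Q2 : Q2 * Q2 = σ := by
    rw [hQ2def, mpow_mul_mpow hσ, show (1/2 + 1/2 : ℝ) = 1 by ring, mpow_one hσ.1]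
  set C1 := P * σ * P with hC1def
  set C2 := P2 * ρ * P2 with hC2def
  have hC1pd : C1.PosDef := posDef_herm_conj hσ (mpow_isHermitian hρ.1 _) hQP
  have hC2pd : C2.PosDef := posDef_herm_conj hρ (mpow_isHermitian hσ.1 _) hQ2P2
  set μ := sNorm ∞ C1 with hμdef
  set lam := sNorm ∞ C2 with hlamdef
  have hμpos : 0 < μ :=
    lt_of_lt_of_le (hC1pd.eigenvalues_pos j0) (le_sNorm_inf hC1pd.posSemidef j0)
  have hlampos : 0 < lam :=
    lt_of_lt_of_le (hC2pd.eigenvalues_pos j0) (le_sNorm_inf hC2pd.posSemidef j0)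
  have hexp : Real.exp (dH ρ σ) = μ * lam := by
    unfold dH
    rw [Real.exp_add, Real.exp_log (show (0:ℝ) < _ from hμpos),
      Real.exp_log (show (0:ℝ) < _ from hlampos)]
  have hkey1 : (((μ : ℝ) : ℂ) • ρ - σ).PosSemidef := by
    have h1 : (((μ : ℝ) : ℂ) • 1 - C1).PosSemidef :=
      psd_smul_one_sub hC1pd.1 fun j => le_sNorm_inf hC1pd.posSemidef j
    have h2 := h1.mul_mul_conjTranspose_same Q
    rw [show Qᴴ = Q from mpow_isHermitian hρ.1 _] at h2
    have hQC1Q : Q * C1 * Q = σ := by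
      rw [hC1def, show Q * (P * σ * P) * Q = Q * P * σ * (P * Q) by
        simp only [Matrix.mul_assoc], hQP, hPQ, Matrix.one_mul, Matrix.mul_one]
    have h3 : Q * ((((μ : ℝ) : ℂ)) • 1 - C1) * Q = ((μ : ℝ) : ℂ) • ρ - σ := by
      rw [Matrix.mul_sub, Matrix.sub_mul, Matrix.mul_smul, Matrix.mul_one, Matrix.smul_mul, hQQ,
        hQC1Q]
    rwa [h3] at h2
  have hkey2 : (((lam : ℝ) : ℂ) • σ - ρ).PosSemidef := by
    have h1 : (((lam : ℝ) : ℂ) • 1 - C2).PosSemidef :=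
      psd_smul_one_sub hC2pd.1 fun j => le_sNorm_inf hC2pd.posSemidef j
    have h2 := h1.mul_mul_conjTranspose_same Q2
    rw [show Q2ᴴ = Q2 from mpow_isHermitian hσ.1 _] at h2
    have hQC2Q : Q2 * C2 * Q2 = ρ := by
      rw [hC2def, show Q2 * (P2 * ρ * P2) * Q2 = Q2 * P2 * ρ * (P2 * Q2) by
        simp only [Matrix.mul_assoc], hQ2P2, hP2Q2, Matrix.one_mul, Matrix.mul_one]
    have h3 : Q2 * ((((lam : ℝ) : ℂ)) • 1 - C2) * Q2 = ((lam : ℝ) : ℂ) • σ - ρ := by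
      rw [Matrix.mul_sub, Matrix.sub_mul, Matrix.mul_smul, Matrix.mul_one, Matrix.smul_mul, hQ2Q2,
        hQC2Q]
    rwa [h3] at h2
  have hσpos : 0 < sNorm q σ :=
    lt_of_le_of_ne (sNorm_nonneg _ _) (Ne.symm (hnorm ▸ hne))
  have hρpos : 0 < sNorm q ρ := hnorm ▸ hσpos
  have hμ1 : 1 ≤ μ := by
    have h1 := sNorm_le_of_psd_sub hσ hρ hμpos hkey1 hq
    rw [← hnorm] at h1
    nlinarith
  have hlam1 : 1 ≤ lam := by
    have h1 := sNorm_le_of_psd_sub hρ hσ hlampos hkey2 hq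
    rw [hnorm] at h1
    nlinarith
  constructor
  · have hfact : ((Real.exp (dH ρ σ) : ℝ) : ℂ) • σ - ρ
        = ((((lam : ℝ)) : ℂ) • σ - ρ) + (((μ * lam - lam : ℝ) : ℂ) • σ) := by
      rw [hexp]
      push_cast
      module
    rw [hfact]
    exact hkey2.add (psd_smul hσ.posSemidef (by nlinarith))
  · have hfact : ((Real.exp (dH ρ σ) : ℝ) : ℂ) • ρ - σ
        = ((((μ : ℝ)) : ℂ) • ρ - σ) + (((μ * lam - μ : ℝ) : ℂ) • ρ) := by
      rw [hexp]
      push_cast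
      module
    rw [hfact]
    exact hkey1.add (psd_smul hρ.posSemidef (by nlinarith))

end
end

section
/- Let Λ : ℂ^{d×d} → ℂ^{d×d} be a positive (positivity-preserving) linear map satisfying Λ(ω) ≥ (Tr[ω]/(Nd)) 𝟙 for all ω ≥ 0 and ‖Λ‖_{∞→∞} ≤ 1, and suppose Λ is trace preserving. Then for 1 ≤ p ≤ 2 ≤ q ≤ ∞ and any ω ≥ 0 with ‖ω‖_q = 1, the normalized Boyd iterate satisfies S(ω)/‖S(ω)‖_q ≥ (Nd)^{(1−p)/(q−1)} d^{−1/q} 𝟙 ≥ (1/(Nd√d)) 𝟙, where S(ω) = Λ*(Λ(ω)^{p−1})^{1/(q−1)}. -/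
open scoped BigOperators ENNReal Kronecker ComplexOrder
open Matrix

noncomputable section

namespace BoydAux

variable {d : ℕ}

lemma unitary_mul_star (U : Matrix.unitaryGroup (Fin d) ℂ) :
    (U : Matrix (Fin d) (Fin d) ℂ) * star (U : Matrix (Fin d) (Fin d) ℂ) = 1 :=
  Matrix.mem_unitaryGroup_iff.mp U.2

lemma star_mul_unitary (U : Matrix.unitaryGroup (Fin d) ℂ) :
    star (U : Matrix (Fin d) (Fin d) ℂ) * (U : Matrix (Fin d) (Fin d) ℂ) = 1 :=
  Matrix.mem_unitaryGroup_iff'.mp U.2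

lemma star_conj_conj (U : Matrix.unitaryGroup (Fin d) ℂ) (M : Matrix (Fin d) (Fin d) ℂ) :
    star (U : Matrix (Fin d) (Fin d) ℂ) *
      ((U : Matrix (Fin d) (Fin d) ℂ) * M * star (U : Matrix (Fin d) (Fin d) ℂ)) *
      (U : Matrix (Fin d) (Fin d) ℂ) = M := by
  simp only [Matrix.mul_assoc]
  rw [star_mul_unitary, Matrix.mul_one, ← Matrix.mul_assoc, star_mul_unitary, Matrix.one_mul]

/-- conjugation of a real diagonal by a unitary, basic PSD iff. -/
lemma psd_conj_diag_iff (U : Matrix.unitaryGroup (Fin d) ℂ) (w : Fin d → ℝ) :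
    ((U : Matrix (Fin d) (Fin d) ℂ) * Matrix.diagonal (fun i => ((w i : ℝ) : ℂ)) *
      star (U : Matrix (Fin d) (Fin d) ℂ)).PosSemidef ↔ ∀ i, 0 ≤ w i := by
  constructor
  · intro h
    have h2 := h.conjTranspose_mul_mul_same (B := (U : Matrix (Fin d) (Fin d) ℂ))
    rw [← Matrix.star_eq_conjTranspose, star_conj_conj] at h2
    intro i
    exact_mod_cast Matrix.posSemidef_diagonal_iff.mp h2 i
  · intro hw
    have hD : (Matrix.diagonal (fun i => ((w i : ℝ) : ℂ))).PosSemidef :=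
      Matrix.posSemidef_diagonal_iff.mpr (fun i => by exact_mod_cast hw i)
    simpa [Matrix.star_eq_conjTranspose] using
      hD.mul_mul_conjTranspose_same (B := (U : Matrix (Fin d) (Fin d) ℂ))

lemma conj_smul_one (U : Matrix.unitaryGroup (Fin d) ℂ) (c : ℂ) :
    (U : Matrix (Fin d) (Fin d) ℂ) * (c • (1 : Matrix (Fin d) (Fin d) ℂ)) *
      star (U : Matrix (Fin d) (Fin d) ℂ) = c • 1 := by
  rw [Matrix.mul_smul, Matrix.smul_mul, mul_one, unitary_mul_star]

lemma conj_diag_sub_smul_one (U : Matrix.unitaryGroup (Fin d) ℂ) (w : Fin d → ℝ) (c : ℝ) :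
    (U : Matrix (Fin d) (Fin d) ℂ) * Matrix.diagonal (fun i => ((w i : ℝ) : ℂ)) *
      star (U : Matrix (Fin d) (Fin d) ℂ) - (c : ℂ) • 1 =
    (U : Matrix (Fin d) (Fin d) ℂ) * Matrix.diagonal (fun i => ((w i - c : ℝ) : ℂ)) *
      star (U : Matrix (Fin d) (Fin d) ℂ) := by
  conv_lhs => rw [← conj_smul_one U (c : ℂ)]
  rw [← Matrix.sub_mul, ← Matrix.mul_sub]
  congr 2
  rw [Matrix.smul_one_eq_diagonal, Matrix.diagonal_sub]
  congr 1
  ext i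
  push_cast
  ring

lemma smul_one_sub_conj_diag (U : Matrix.unitaryGroup (Fin d) ℂ) (w : Fin d → ℝ) (c : ℝ) :
    (c : ℂ) • 1 - (U : Matrix (Fin d) (Fin d) ℂ) * Matrix.diagonal (fun i => ((w i : ℝ) : ℂ)) *
      star (U : Matrix (Fin d) (Fin d) ℂ) =
    (U : Matrix (Fin d) (Fin d) ℂ) * Matrix.diagonal (fun i => ((c - w i : ℝ) : ℂ)) *
      star (U : Matrix (Fin d) (Fin d) ℂ) := by
  conv_lhs => rw [← conj_smul_one U (c : ℂ)]
  rw [← Matrix.sub_mul, ← Matrix.mul_sub]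
  congr 2
  rw [Matrix.smul_one_eq_diagonal, Matrix.diagonal_sub]
  congr 1
  ext i
  push_cast
  ring

/-- lower bound iff -/
lemma conj_diag_ge_iff (U : Matrix.unitaryGroup (Fin d) ℂ) (w : Fin d → ℝ) (c : ℝ) :
    ((U : Matrix (Fin d) (Fin d) ℂ) * Matrix.diagonal (fun i => ((w i : ℝ) : ℂ)) *
      star (U : Matrix (Fin d) (Fin d) ℂ) - (c : ℂ) • 1).PosSemidef ↔ ∀ i, c ≤ w i := by
  rw [conj_diag_sub_smul_one, psd_conj_diag_iff]
  simp [sub_nonneg]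

/-- upper bound iff -/
lemma conj_diag_le_iff (U : Matrix.unitaryGroup (Fin d) ℂ) (w : Fin d → ℝ) (c : ℝ) :
    ((c : ℂ) • 1 - (U : Matrix (Fin d) (Fin d) ℂ) * Matrix.diagonal (fun i => ((w i : ℝ) : ℂ)) *
      star (U : Matrix (Fin d) (Fin d) ℂ)).PosSemidef ↔ ∀ i, w i ≤ c := by
  rw [smul_one_sub_conj_diag, psd_conj_diag_iff]
  simp [sub_nonneg]

lemma trace_conj_diag (U : Matrix.unitaryGroup (Fin d) ℂ) (w : Fin d → ℝ) :
    ((U : Matrix (Fin d) (Fin d) ℂ) * Matrix.diagonal (fun i => ((w i : ℝ) : ℂ)) *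
      star (U : Matrix (Fin d) (Fin d) ℂ)).trace = ((∑ i, w i : ℝ) : ℂ) := by
  rw [Matrix.trace_mul_cycle, star_mul_unitary, Matrix.one_mul, Matrix.trace_diagonal]
  push_cast
  rfl


section Herm
variable {d : ℕ} {A X : Matrix (Fin d) (Fin d) ℂ}

lemma spectral (hA : A.IsHermitian) :
    A = (hA.eigenvectorUnitary : Matrix (Fin d) (Fin d) ℂ) *
      Matrix.diagonal (fun i => ((hA.eigenvalues i : ℝ) : ℂ)) *
      star (hA.eigenvectorUnitary : Matrix (Fin d) (Fin d) ℂ) :=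
  hA.spectral_theorem

lemma herm_ge_iff (hA : A.IsHermitian) (c : ℝ) :
    (A - (c : ℂ) • 1).PosSemidef ↔ ∀ i, c ≤ hA.eigenvalues i := by
  conv_lhs => rw [spectral hA]
  exact conj_diag_ge_iff _ _ _

lemma herm_le_iff (hA : A.IsHermitian) (c : ℝ) :
    ((c : ℂ) • 1 - A).PosSemidef ↔ ∀ i, hA.eigenvalues i ≤ c := by
  conv_lhs => rw [spectral hA]
  exact conj_diag_le_iff _ _ _

lemma star_mul_unitary_assoc (U : Matrix.unitaryGroup (Fin d) ℂ) (M : Matrix (Fin d) (Fin d) ℂ) :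
    star (U : Matrix (Fin d) (Fin d) ℂ) * ((U : Matrix (Fin d) (Fin d) ℂ) * M) = M := by
  rw [← Matrix.mul_assoc, star_mul_unitary, Matrix.one_mul]

lemma mpow_eq (hA : A.IsHermitian) (r : ℝ) :
    mpow A r = (hA.eigenvectorUnitary : Matrix (Fin d) (Fin d) ℂ) *
      Matrix.diagonal (fun i => ((hA.eigenvalues i ^ r : ℝ) : ℂ)) *
      star (hA.eigenvectorUnitary : Matrix (Fin d) (Fin d) ℂ) := by
  rw [mpow, dif_pos hA]

lemma herm_sq (hA : A.IsHermitian) :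
    Aᴴ * A = (hA.eigenvectorUnitary : Matrix (Fin d) (Fin d) ℂ) *
      Matrix.diagonal (fun i => ((hA.eigenvalues i ^ 2 : ℝ) : ℂ)) *
      star (hA.eigenvectorUnitary : Matrix (Fin d) (Fin d) ℂ) := by
  rw [hA.eq]
  conv_lhs => rw [spectral hA]
  simp only [Matrix.mul_assoc]
  rw [star_mul_unitary_assoc]
  rw [show Matrix.diagonal (fun i => ((hA.eigenvalues i : ℝ) : ℂ)) *
      (Matrix.diagonal (fun i => ((hA.eigenvalues i : ℝ) : ℂ)) *
        star (hA.eigenvectorUnitary : Matrix (Fin d) (Fin d) ℂ)) =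
      (Matrix.diagonal (fun i => ((hA.eigenvalues i : ℝ) : ℂ)) *
      Matrix.diagonal (fun i => ((hA.eigenvalues i : ℝ) : ℂ))) *
        star (hA.eigenvectorUnitary : Matrix (Fin d) (Fin d) ℂ) from (Matrix.mul_assoc _ _ _).symm]
  rw [Matrix.diagonal_mul_diagonal]
  congr 2
  ext i
  push_cast
  ring

/-- eigenvalues of `XᴴX` for Hermitian `X` with eigenvalue lower bound. -/
lemma mu_ge (hX : X.IsHermitian) {c : ℝ} (hc : 0 ≤ c) (h : ∀ i, c ≤ hX.eigenvalues i) :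
    ∀ j, c ^ 2 ≤ (Matrix.posSemidef_conjTranspose_mul_self X).1.eigenvalues j := by
  have hpsd : (Xᴴ * X - ((c ^ 2 : ℝ) : ℂ) • 1).PosSemidef := by
    rw [herm_sq hX]
    exact (conj_diag_ge_iff _ _ _).mpr fun i =>
      pow_le_pow_left₀ hc (h i) 2
  exact (herm_ge_iff (Matrix.posSemidef_conjTranspose_mul_self X).1 _).mp hpsd

lemma mu_le (hX : X.IsHermitian) {t : ℝ} (h0 : ∀ i, 0 ≤ hX.eigenvalues i)
    (h : ∀ i, hX.eigenvalues i ≤ t) :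
    ∀ j, (Matrix.posSemidef_conjTranspose_mul_self X).1.eigenvalues j ≤ t ^ 2 := by
  have hpsd : (((t ^ 2 : ℝ) : ℂ) • 1 - Xᴴ * X).PosSemidef := by
    rw [herm_sq hX]
    exact (conj_diag_le_iff _ _ _).mpr fun i => pow_le_pow_left₀ (h0 i) (h i) 2
  exact (herm_le_iff (Matrix.posSemidef_conjTranspose_mul_self X).1 _).mp hpsd

/-- sum of the `μ` eigenvalues equals the sum of squares of eigenvalues, for Hermitian `X`. -/
lemma sum_mu (hX : X.IsHermitian) :
    ∑ j, (Matrix.posSemidef_conjTranspose_mul_self X).1.eigenvalues j =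
      ∑ i, hX.eigenvalues i ^ 2 := by
  have h1 : (Xᴴ * X).trace = ((∑ j, (Matrix.posSemidef_conjTranspose_mul_self X).1.eigenvalues j : ℝ) : ℂ) := by
    conv_lhs => rw [spectral (Matrix.posSemidef_conjTranspose_mul_self X).1]
    exact trace_conj_diag _ _
  have h2 : (Xᴴ * X).trace = ((∑ i, hX.eigenvalues i ^ 2 : ℝ) : ℂ) := by
    conv_lhs => rw [herm_sq hX]
    exact trace_conj_diag _ _
  exact_mod_cast h1.symm.trans h2

end Herm


section SNorm
variable {d : ℕ} {X : Matrix (Fin d) (Fin d) ℂ}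

lemma mu_nonneg (X : Matrix (Fin d) (Fin d) ℂ) (j : Fin d) :
    0 ≤ (Matrix.posSemidef_conjTranspose_mul_self X).1.eigenvalues j :=
  (Matrix.posSemidef_conjTranspose_mul_self X).eigenvalues_nonneg j

lemma toReal_q {q : ℝ≥0∞} (hq : 2 ≤ q) (hq' : q ≠ ∞) : 2 ≤ q.toReal := by
  have := (ENNReal.toReal_le_toReal (by norm_num) hq').mpr hq
  simpa using this

lemma toReal_one_div_q {q : ℝ≥0∞} : (1 / q : ℝ≥0∞).toReal = 1 / q.toReal := by
  rw [one_div, one_div, ENNReal.toReal_inv]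

/-- upper bound on `sNorm` given a uniform trace-style bound. -/
lemma sNorm_le_T {q : ℝ≥0∞} (hq : 2 ≤ q) {T : ℝ} (hT : 0 ≤ T)
    (hμt : ∀ j, (Matrix.posSemidef_conjTranspose_mul_self X).1.eigenvalues j ≤ T ^ 2)
    (hsum : ∑ j, (Matrix.posSemidef_conjTranspose_mul_self X).1.eigenvalues j ≤ T ^ 2) :
    sNorm q X ≤ T := by
  set μ := (Matrix.posSemidef_conjTranspose_mul_self X).1.eigenvalues with hμdef
  by_cases hq' : q = ∞
  · rw [sNorm, if_pos hq']
    exact Real.iSup_le (fun j => by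
      calc Real.sqrt (μ j) ≤ Real.sqrt (T ^ 2) := Real.sqrt_le_sqrt (hμt j)
      _ = T := Real.sqrt_sq hT) hT
  · rw [sNorm, if_neg hq']
    set r := q.toReal with hrdef
    have hr : 2 ≤ r := toReal_q hq hq'
    have hr0 : 0 < r := by linarith
    have key : ∀ j, μ j ^ (r / 2) ≤ μ j * T ^ (r - 2) := by
      intro j
      have hnn := mu_nonneg X j
      rw [← hμdef] at hnn
      rcases eq_or_lt_of_le hnn with h | h
      · rw [← h, Real.zero_rpow (by positivity), zero_mul]
      · have e1 : μ j ^ (r / 2) = μ j * μ j ^ (r / 2 - 1) := by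
          have e0 : μ j ^ (r / 2) = μ j ^ ((1 : ℝ) + (r / 2 - 1)) := by norm_num
          rw [e0, Real.rpow_add h, Real.rpow_one]
        rw [e1]
        refine mul_le_mul_of_nonneg_left ?_ h.le
        calc μ j ^ (r / 2 - 1) ≤ (T ^ 2) ^ (r / 2 - 1) :=
              Real.rpow_le_rpow h.le (hμt j) (by linarith)
          _ = T ^ (r - 2) := by
              rw [← Real.rpow_natCast T 2, ← Real.rpow_mul hT]
              congr 1
              push_cast
              ring
    have hTr : T ^ 2 * T ^ (r - 2) = T ^ r := by
      rcases eq_or_lt_of_le hT with h | h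
      · rw [← h]
        simp [Real.zero_rpow hr0.ne']
      · rw [← Real.rpow_natCast T 2, ← Real.rpow_add h]
        congr 1
        push_cast
        ring
    calc (∑ j, μ j ^ (r / 2)) ^ (1 / r)
        ≤ (T ^ r) ^ (1 / r) := by
          apply Real.rpow_le_rpow (Finset.sum_nonneg fun j _ => Real.rpow_nonneg (mu_nonneg X j) _)
          · calc ∑ j, μ j ^ (r / 2) ≤ ∑ j, μ j * T ^ (r - 2) :=
                  Finset.sum_le_sum fun j _ => key j
              _ = (∑ j, μ j) * T ^ (r - 2) := by rw [Finset.sum_mul]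
              _ ≤ T ^ 2 * T ^ (r - 2) :=
                  mul_le_mul_of_nonneg_right hsum (Real.rpow_nonneg hT _)
              _ = T ^ r := hTr
          · positivity
      _ = T := by
          rw [← Real.rpow_mul hT, mul_one_div, div_self (ne_of_gt hr0), Real.rpow_one]

/-- upper bound `t * d^(1/q)` on `sNorm` from a uniform eigenvalue bound. -/
lemma sNorm_le_dim {q : ℝ≥0∞} (hq : 2 ≤ q) {t : ℝ} (ht : 0 ≤ t)
    (hμt : ∀ j, (Matrix.posSemidef_conjTranspose_mul_self X).1.eigenvalues j ≤ t ^ 2) :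
    sNorm q X ≤ t * (d : ℝ) ^ (1 / q : ℝ≥0∞).toReal := by
  set μ := (Matrix.posSemidef_conjTranspose_mul_self X).1.eigenvalues with hμdef
  by_cases hq' : q = ∞
  · rw [sNorm, if_pos hq', hq']
    rw [show (1 / (∞ : ℝ≥0∞)).toReal = 0 by simp, Real.rpow_zero, mul_one]
    exact Real.iSup_le (fun j => by
      calc Real.sqrt (μ j) ≤ Real.sqrt (t ^ 2) := Real.sqrt_le_sqrt (hμt j)
      _ = t := Real.sqrt_sq ht) ht
  · rw [sNorm, if_neg hq']
    set r := q.toReal with hrdef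
    have hr : 2 ≤ r := toReal_q hq hq'
    have hr0 : 0 < r := by linarith
    have hstep : ∀ j, μ j ^ (r / 2) ≤ t ^ r := by
      intro j
      calc μ j ^ (r / 2) ≤ (t ^ 2) ^ (r / 2) :=
            Real.rpow_le_rpow (mu_nonneg X j) (hμt j) (by positivity)
        _ = t ^ r := by
            rw [← Real.rpow_natCast t 2, ← Real.rpow_mul ht]
            congr 1
            push_cast
            ring
    calc (∑ j, μ j ^ (r / 2)) ^ (1 / r)
        ≤ ((d : ℝ) * t ^ r) ^ (1 / r) := by
          apply Real.rpow_le_rpow (Finset.sum_nonneg fun j _ => Real.rpow_nonneg (mu_nonneg X j) _)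
          · calc ∑ j, μ j ^ (r / 2) ≤ ∑ _j : Fin d, t ^ r :=
                Finset.sum_le_sum fun j _ => hstep j
              _ = (d : ℝ) * t ^ r := by simp [Finset.sum_const, mul_comm]
          · positivity
      _ = t * (d : ℝ) ^ (1 / q : ℝ≥0∞).toReal := by
          rw [Real.mul_rpow (by positivity) (Real.rpow_nonneg ht _),
            ← Real.rpow_mul ht, mul_one_div, div_self (ne_of_gt hr0), Real.rpow_one,
            toReal_one_div_q, one_div, mul_comm]

/-- lower bound on `sNorm` from a uniform eigenvalue lower bound. -/
lemma le_sNorm (hd : 0 < d) {q : ℝ≥0∞} (hq : 2 ≤ q) {α : ℝ} (hα : 0 ≤ α)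
    (hμ : ∀ j, α ^ 2 ≤ (Matrix.posSemidef_conjTranspose_mul_self X).1.eigenvalues j) :
    α ≤ sNorm q X := by
  have : Nonempty (Fin d) := ⟨⟨0, hd⟩⟩
  set μ := (Matrix.posSemidef_conjTranspose_mul_self X).1.eigenvalues with hμdef
  have j0 : Fin d := ⟨0, hd⟩
  by_cases hq' : q = ∞
  · rw [sNorm, if_pos hq']
    calc α = Real.sqrt (α ^ 2) := (Real.sqrt_sq hα).symm
      _ ≤ Real.sqrt (μ j0) := Real.sqrt_le_sqrt (hμ j0)
      _ ≤ ⨆ j, Real.sqrt (μ j) := le_ciSup (f := fun j => Real.sqrt (μ j)) (Set.Finite.bddAbove (Set.finite_range _)) j0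
  · rw [sNorm, if_neg hq']
    set r := q.toReal with hrdef
    have hr : 2 ≤ r := toReal_q hq hq'
    have hr0 : 0 < r := by linarith
    calc α = (α ^ r) ^ (1 / r) := by
          rw [← Real.rpow_mul hα, mul_one_div, div_self hr0.ne', Real.rpow_one]
      _ ≤ (∑ j, μ j ^ (r / 2)) ^ (1 / r) := by
          apply Real.rpow_le_rpow (Real.rpow_nonneg hα _) ?_ (by positivity)
          calc α ^ r = (α ^ 2) ^ (r / 2) := by
                rw [← Real.rpow_natCast α 2, ← Real.rpow_mul hα]
                congr 1
                push_cast
                ring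
            _ ≤ μ j0 ^ (r / 2) := Real.rpow_le_rpow (by positivity) (hμ j0) (by positivity)
            _ ≤ ∑ j, μ j ^ (r / 2) := Finset.single_le_sum
                (fun j _ => Real.rpow_nonneg (mu_nonneg X j) _) (Finset.mem_univ j0)

end SNorm


section Psd
variable {d : ℕ} {M A B : Matrix (Fin d) (Fin d) ℂ}

lemma psd_diag_nonneg (hM : M.PosSemidef) (k : Fin d) : 0 ≤ M k k := by
  have h := hM.dotProduct_mulVec_nonneg (Pi.single k 1)
  simpa [dotProduct, Matrix.mulVec, Pi.single_apply, Finset.sum_ite_eq,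
    Finset.sum_ite_eq'] using h

lemma psd_trace_nonneg (hM : M.PosSemidef) : 0 ≤ M.trace := by
  rw [Matrix.trace]
  exact Finset.sum_nonneg fun k _ => psd_diag_nonneg hM k

lemma psd_trace_mul_nonneg (hA : A.PosSemidef) (hB : B.PosSemidef) : 0 ≤ (A * B).trace := by
  obtain ⟨C, rfl⟩ : ∃ C : Matrix (Fin d) (Fin d) ℂ, B = Cᴴ * C := by
    open scoped MatrixOrder in
    obtain ⟨C, hC⟩ := CStarAlgebra.nonneg_iff_eq_star_mul_self.mp hB.nonneg
    exact ⟨C, hC⟩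
  rw [← Matrix.mul_assoc, Matrix.trace_mul_cycle]
  exact psd_trace_nonneg (hA.mul_mul_conjTranspose_same C)

lemma psd_smul_real (hM : M.PosSemidef) {r : ℝ} (hr : 0 ≤ r) : ((r : ℂ) • M).PosSemidef := by
  refine Matrix.PosSemidef.of_dotProduct_mulVec_nonneg ?_ ?_
  · rw [Matrix.IsHermitian, Matrix.conjTranspose_smul, hM.1.eq]
    norm_num
  · intro x
    rw [Matrix.smul_mulVec, dotProduct_smul, smul_eq_mul]
    exact mul_nonneg (by exact_mod_cast hr) (hM.dotProduct_mulVec_nonneg x)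

lemma psd_smul_one {r : ℝ} (hr : 0 ≤ r) : ((r : ℂ) • (1 : Matrix (Fin d) (Fin d) ℂ)).PosSemidef :=
  psd_smul_real Matrix.PosSemidef.one hr

end Psd

section SNormInf
variable {d : ℕ} {X : Matrix (Fin d) (Fin d) ℂ}

lemma sNorm_inf_def (X : Matrix (Fin d) (Fin d) ℂ) :
    sNorm ∞ X = ⨆ j, Real.sqrt ((Matrix.posSemidef_conjTranspose_mul_self X).1.eigenvalues j) := by
  rw [sNorm, if_pos rfl]

lemma sqrt_mu_le (X : Matrix (Fin d) (Fin d) ℂ) (j : Fin d) :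
    Real.sqrt ((Matrix.posSemidef_conjTranspose_mul_self X).1.eigenvalues j) ≤ sNorm ∞ X := by
  rw [sNorm_inf_def]
  exact le_ciSup (f := fun j => Real.sqrt ((Matrix.posSemidef_conjTranspose_mul_self X).1.eigenvalues j))
    (Set.Finite.bddAbove (Set.finite_range _)) j

lemma sNorm_inf_nonneg (hd : 0 < d) (X : Matrix (Fin d) (Fin d) ℂ) : 0 ≤ sNorm ∞ X :=
  le_trans (Real.sqrt_nonneg _) (sqrt_mu_le X ⟨0, hd⟩)

lemma mu_le_sNorm_inf_sq (X : Matrix (Fin d) (Fin d) ℂ) (j : Fin d) :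
    (Matrix.posSemidef_conjTranspose_mul_self X).1.eigenvalues j ≤ sNorm ∞ X ^ 2 := by
  have h := sqrt_mu_le X j
  have h2 := Real.sq_sqrt (mu_nonneg X j)
  nlinarith [Real.sqrt_nonneg ((Matrix.posSemidef_conjTranspose_mul_self X).1.eigenvalues j)]

lemma mu_le_one_of_sNorm_eq_one {q : ℝ≥0∞} (hq : 2 ≤ q) (h : sNorm q X = 1) :
    ∀ j, (Matrix.posSemidef_conjTranspose_mul_self X).1.eigenvalues j ≤ 1 := by
  intro j
  by_cases hq' : q = ∞
  · have := mu_le_sNorm_inf_sq X j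
    rw [← hq', h] at this
    simpa using this
  · rw [sNorm, if_neg hq'] at h
    set r := q.toReal with hrdef
    have hr : 2 ≤ r := toReal_q hq hq'
    have hr0 : 0 < r := by linarith
    have hsum0 : 0 ≤ ∑ i, (Matrix.posSemidef_conjTranspose_mul_self X).1.eigenvalues i ^ (r / 2) :=
      Finset.sum_nonneg fun i _ => Real.rpow_nonneg (mu_nonneg X i) _
    have hsum : (∑ i, (Matrix.posSemidef_conjTranspose_mul_self X).1.eigenvalues i ^ (r / 2)) = 1 := by
      have := congrArg (fun x : ℝ => x ^ r) h
      simp only [Real.one_rpow] at this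
      rwa [← Real.rpow_mul hsum0, one_div, inv_mul_cancel₀ hr0.ne', Real.rpow_one] at this
    have hj : (Matrix.posSemidef_conjTranspose_mul_self X).1.eigenvalues j ^ (r / 2) ≤ 1 := by
      rw [← hsum]
      exact Finset.single_le_sum (fun i _ => Real.rpow_nonneg (mu_nonneg X i) _) (Finset.mem_univ j)
    by_contra hcon
    push_neg at hcon
    have : (1 : ℝ) < (Matrix.posSemidef_conjTranspose_mul_self X).1.eigenvalues j ^ (r / 2) := by
      calc (1 : ℝ) = 1 ^ (r / 2) := (Real.one_rpow _).symm
        _ < (Matrix.posSemidef_conjTranspose_mul_self X).1.eigenvalues j ^ (r / 2) :=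
          Real.rpow_lt_rpow (by norm_num) hcon (by linarith)
    linarith

lemma trace_conjTranspose_mul_self (X : Matrix (Fin d) (Fin d) ℂ) :
    (Xᴴ * X).trace = ((∑ k, ∑ l, ‖X k l‖ ^ 2 : ℝ) : ℂ) := by
  rw [Matrix.trace]
  push_cast
  rw [Finset.sum_comm]
  apply Finset.sum_congr rfl
  intro l _
  rw [Matrix.diag_apply, Matrix.mul_apply]
  apply Finset.sum_congr rfl
  intro k _
  rw [Matrix.conjTranspose_apply]
  simp only [Complex.star_def, ← Complex.normSq_eq_conj_mul_self, Complex.normSq_eq_norm_sq]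
  push_cast
  ring

lemma sum_mu_eq_sum_entries (X : Matrix (Fin d) (Fin d) ℂ) :
    ∑ j, (Matrix.posSemidef_conjTranspose_mul_self X).1.eigenvalues j = ∑ k, ∑ l, ‖X k l‖ ^ 2 := by
  have h1 : (Xᴴ * X).trace =
      ((∑ j, (Matrix.posSemidef_conjTranspose_mul_self X).1.eigenvalues j : ℝ) : ℂ) := by
    conv_lhs => rw [spectral (Matrix.posSemidef_conjTranspose_mul_self X).1]
    exact trace_conj_diag _ _
  have h2 := trace_conjTranspose_mul_self X
  exact_mod_cast h1.symm.trans h2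

lemma entry_le_sNorm_inf (hd : 0 < d) (X : Matrix (Fin d) (Fin d) ℂ) (i j : Fin d) :
    ‖X i j‖ ≤ sNorm ∞ X := by
  set s := sNorm ∞ X with hs
  have hs0 : 0 ≤ s := sNorm_inf_nonneg hd X
  have hPSD : (((s ^ 2 : ℝ) : ℂ) • 1 - Xᴴ * X).PosSemidef :=
    (herm_le_iff (Matrix.posSemidef_conjTranspose_mul_self X).1 _).mpr (mu_le_sNorm_inf_sq X)
  have hdiag := psd_diag_nonneg hPSD j
  have hentry : ((((s ^ 2 : ℝ) : ℂ) • 1 - Xᴴ * X) j j) = ((s ^ 2 : ℝ) : ℂ) - (Xᴴ * X) j j := by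
    simp [Matrix.sub_apply, Matrix.smul_apply, Matrix.one_apply]
  rw [hentry] at hdiag
  have hXX : (Xᴴ * X) j j = ((∑ k, ‖X k j‖ ^ 2 : ℝ) : ℂ) := by
    rw [Matrix.mul_apply]
    push_cast
    apply Finset.sum_congr rfl
    intro k _
    rw [Matrix.conjTranspose_apply]
    rw [show star (X k j) * X k j = (((‖X k j‖ : ℝ) : ℂ)) ^ 2 by
      simp only [Complex.star_def, ← Complex.normSq_eq_conj_mul_self, Complex.normSq_eq_norm_sq]
      push_cast
      ring]
  rw [hXX] at hdiag
  have : (0 : ℂ) ≤ (((s ^ 2 - ∑ k, ‖X k j‖ ^ 2 : ℝ)) : ℂ) := by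
    convert hdiag using 1
    push_cast
    ring
  rw [Complex.zero_le_real] at this
  have h1 : ‖X i j‖ ^ 2 ≤ s ^ 2 := by
    have h2 : ‖X i j‖ ^ 2 ≤ ∑ k, ‖X k j‖ ^ 2 :=
      Finset.single_le_sum (f := fun k => ‖X k j‖ ^ 2) (fun k _ => sq_nonneg _) (Finset.mem_univ i)
    linarith
  calc ‖X i j‖ = Real.sqrt (‖X i j‖ ^ 2) := (Real.sqrt_sq (norm_nonneg _)).symm
    _ ≤ Real.sqrt (s ^ 2) := Real.sqrt_le_sqrt h1
    _ = s := Real.sqrt_sq hs0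

lemma sNorm_inf_le_sum_entries (X : Matrix (Fin d) (Fin d) ℂ) :
    sNorm ∞ X ≤ ∑ k, ∑ l, ‖X k l‖ := by
  rw [sNorm_inf_def]
  have hnn : 0 ≤ ∑ k, ∑ l, ‖X k l‖ :=
    Finset.sum_nonneg fun k _ => Finset.sum_nonneg fun l _ => norm_nonneg _
  apply Real.iSup_le _ hnn
  intro j
  have h1 : (Matrix.posSemidef_conjTranspose_mul_self X).1.eigenvalues j ≤
      ∑ k, ∑ l, ‖X k l‖ ^ 2 := by
    rw [← sum_mu_eq_sum_entries]
    exact Finset.single_le_sum (fun i _ => mu_nonneg X i) (Finset.mem_univ j)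
  have h2 : ∑ k, ∑ l, ‖X k l‖ ^ 2 ≤ (∑ k, ∑ l, ‖X k l‖) ^ 2 := by
    rw [← Fintype.sum_prod_type (f := fun p : Fin d × Fin d => ‖X p.1 p.2‖ ^ 2),
      ← Fintype.sum_prod_type (f := fun p : Fin d × Fin d => ‖X p.1 p.2‖)]
    exact Finset.sum_sq_le_sq_sum_of_nonneg fun p _ => norm_nonneg _
  calc Real.sqrt ((Matrix.posSemidef_conjTranspose_mul_self X).1.eigenvalues j)
      ≤ Real.sqrt ((∑ k, ∑ l, ‖X k l‖) ^ 2) := Real.sqrt_le_sqrt (by linarith)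
    _ = ∑ k, ∑ l, ‖X k l‖ := Real.sqrt_sq hnn

end SNormInf


section OpBound
variable {d : ℕ} (Λ : Matrix (Fin d) (Fin d) ℂ →ₗ[ℂ] Matrix (Fin d) (Fin d) ℂ)

lemma map_entry (X : Matrix (Fin d) (Fin d) ℂ) (k l : Fin d) :
    (Λ X) k l = ∑ i, ∑ j, X i j * (Λ (Matrix.single i j 1)) k l := by
  conv_lhs => rw [Matrix.matrix_eq_sum_single X]
  rw [map_sum, Matrix.sum_apply]
  refine Finset.sum_congr rfl fun i _ => ?_
  rw [map_sum, Matrix.sum_apply]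
  refine Finset.sum_congr rfl fun j _ => ?_
  rw [show Matrix.single i j (X i j) = X i j • Matrix.single i j (1 : ℂ) by
      rw [Matrix.smul_single, smul_eq_mul, mul_one],
    _root_.map_smul, Matrix.smul_apply, smul_eq_mul]

lemma sNorm_inf_map_le (hd : 0 < d) (X : Matrix (Fin d) (Fin d) ℂ) :
    sNorm ∞ (Λ X) ≤
      (∑ k, ∑ l, ∑ i, ∑ j, ‖(Λ (Matrix.single i j 1)) k l‖) * sNorm ∞ X := by
  set s := sNorm ∞ X with hs
  have hs0 : 0 ≤ s := sNorm_inf_nonneg hd X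
  calc sNorm ∞ (Λ X) ≤ ∑ k, ∑ l, ‖(Λ X) k l‖ := sNorm_inf_le_sum_entries _
    _ ≤ ∑ k, ∑ l, ∑ i, ∑ j, ‖X i j‖ * ‖(Λ (Matrix.single i j 1)) k l‖ := by
        refine Finset.sum_le_sum fun k _ => Finset.sum_le_sum fun l _ => ?_
        rw [map_entry]
        refine le_trans (norm_sum_le _ _) (Finset.sum_le_sum fun i _ => ?_)
        refine le_trans (norm_sum_le _ _) (Finset.sum_le_sum fun j _ => ?_)
        rw [norm_mul]
    _ ≤ ∑ k, ∑ l, ∑ i, ∑ j, s * ‖(Λ (Matrix.single i j 1)) k l‖ := by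
        refine Finset.sum_le_sum fun k _ => Finset.sum_le_sum fun l _ =>
          Finset.sum_le_sum fun i _ => Finset.sum_le_sum fun j _ => ?_
        exact mul_le_mul_of_nonneg_right (entry_le_sNorm_inf hd X i j) (norm_nonneg _)
    _ = (∑ k, ∑ l, ∑ i, ∑ j, ‖(Λ (Matrix.single i j 1)) k l‖) * s := by
        simp only [Finset.sum_mul, Finset.mul_sum]
        refine Finset.sum_congr rfl fun k _ => Finset.sum_congr rfl fun l _ =>
          Finset.sum_congr rfl fun i _ => Finset.sum_congr rfl fun j _ => mul_comm _ _

lemma sNorm_map_le_self (hd : 0 < d) (hnorm : mapMixedNorm ∞ ∞ Λ ≤ 1)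
    {X : Matrix (Fin d) (Fin d) ℂ} (hX : 0 < sNorm ∞ X) : sNorm ∞ (Λ X) ≤ sNorm ∞ X := by
  set C := ∑ k, ∑ l, ∑ i, ∑ j, ‖(Λ (Matrix.single i j 1)) k l‖ with hC
  have hC0 : 0 ≤ C := Finset.sum_nonneg fun k _ => Finset.sum_nonneg fun l _ =>
    Finset.sum_nonneg fun i _ => Finset.sum_nonneg fun j _ => norm_nonneg _
  have hb : BddAbove (Set.range fun Y : Matrix (Fin d) (Fin d) ℂ => sNorm ∞ (Λ Y) / sNorm ∞ Y) := by
    refine ⟨C, ?_⟩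
    rintro x ⟨Y, rfl⟩
    rcases eq_or_lt_of_le (sNorm_inf_nonneg hd Y) with h | h
    · simp only [← h, div_zero]
      exact hC0
    · rw [div_le_iff₀ h]
      exact sNorm_inf_map_le Λ hd Y
  have h1 : sNorm ∞ (Λ X) / sNorm ∞ X ≤ mapMixedNorm ∞ ∞ Λ := by
    rw [mapMixedNorm]
    exact le_ciSup (f := fun Y : Matrix (Fin d) (Fin d) ℂ => sNorm ∞ (Λ Y) / sNorm ∞ Y) hb X
  have := le_trans h1 hnorm
  rwa [div_le_one hX] at this

end OpBound


section Adj
variable {d : ℕ} (Λ : Matrix (Fin d) (Fin d) ℂ →ₗ[ℂ] Matrix (Fin d) (Fin d) ℂ)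

lemma adj_apply (H : Matrix (Fin d) (Fin d) ℂ) (i j : Fin d) :
    hsAdj Λ H i j = ((Λ (Matrix.single i j 1))ᴴ * H).trace := rfl

lemma trace_stdBasisMatrix (i j : Fin d) :
    (Matrix.single i j (1 : ℂ)).trace = if i = j then 1 else 0 := by
  by_cases h : i = j
  · subst h
    simp [Matrix.trace, Matrix.diag, Matrix.single, Finset.sum_ite_eq, and_self]
  · rw [Matrix.trace, if_neg h]
    apply Finset.sum_eq_zero
    intro k _
    simp only [Matrix.diag_apply, Matrix.single, Matrix.of_apply]
    rw [if_neg]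
    rintro ⟨rfl, rfl⟩
    exact h rfl

lemma adj_one (hTP : ∀ X, (Λ X).trace = X.trace) : hsAdj Λ 1 = 1 := by
  ext i j
  rw [adj_apply, Matrix.mul_one, Matrix.trace_conjTranspose, hTP, trace_stdBasisMatrix]
  by_cases h : i = j <;> simp [h, Matrix.one_apply]

lemma stdBasis_conjT (i j : Fin d) :
    (Matrix.single i j (1 : ℂ))ᴴ = Matrix.single j i 1 := by
  ext a b
  simp only [Matrix.conjTranspose_apply, Matrix.single, Matrix.of_apply]
  by_cases h1 : j = a <;> by_cases h2 : i = b <;> simp [h1, h2, and_comm]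

variable {Λ}

lemma herm_decomp {H : Matrix (Fin d) (Fin d) ℂ} (hH : H.IsHermitian) :
    ∃ (P : Matrix (Fin d) (Fin d) ℂ) (c : ℝ),
      P.PosSemidef ∧ H = P - (c : ℂ) • 1 ∧ 0 ≤ c := by
  set c := ∑ i, |hH.eigenvalues i| with hc
  have hc0 : 0 ≤ c := Finset.sum_nonneg fun i _ => abs_nonneg _
  refine ⟨H - ((-c : ℝ) : ℂ) • 1, c, ?_, ?_, hc0⟩
  · rw [herm_ge_iff hH]
    intro i
    have h1 : |hH.eigenvalues i| ≤ c :=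
      Finset.single_le_sum (f := fun i => |hH.eigenvalues i|) (fun i _ => abs_nonneg _)
        (Finset.mem_univ i)
    have := neg_abs_le (hH.eigenvalues i)
    linarith
  · push_cast
    module

lemma map_herm (hpos : ∀ X : Matrix (Fin d) (Fin d) ℂ, X.PosSemidef → (Λ X).PosSemidef)
    {H : Matrix (Fin d) (Fin d) ℂ} (hH : H.IsHermitian) : (Λ H).IsHermitian := by
  obtain ⟨P, c, hP, hHP, hc0⟩ := herm_decomp hH
  rw [hHP, map_sub, _root_.map_smul]
  have h1 : (Λ P).IsHermitian := (hpos P hP).1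
  have h2 : (Λ 1).IsHermitian := (hpos 1 Matrix.PosSemidef.one).1
  rw [Matrix.IsHermitian, Matrix.conjTranspose_sub, Matrix.conjTranspose_smul, h1.eq, h2.eq]
  norm_num

lemma map_conjTranspose (hpos : ∀ X : Matrix (Fin d) (Fin d) ℂ, X.PosSemidef → (Λ X).PosSemidef)
    (X : Matrix (Fin d) (Fin d) ℂ) : Λ (Xᴴ) = (Λ X)ᴴ := by
  have hH1h : ((2⁻¹ : ℂ) • (X + Xᴴ)).IsHermitian := by
    rw [Matrix.IsHermitian, Matrix.conjTranspose_smul, Matrix.conjTranspose_add,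
      Matrix.conjTranspose_conjTranspose]
    rw [show star (2⁻¹ : ℂ) = (2⁻¹ : ℂ) by simp]
    rw [add_comm]
  have hH2h : ((-(Complex.I) / 2 : ℂ) • (X - Xᴴ)).IsHermitian := by
    rw [Matrix.IsHermitian, Matrix.conjTranspose_smul, Matrix.conjTranspose_sub,
      Matrix.conjTranspose_conjTranspose]
    rw [show star (-(Complex.I) / 2 : ℂ) = (Complex.I / 2 : ℂ) by
      simp [Complex.star_def, Complex.conj_I]]
    match_scalars <;> ring
  have h2 : Complex.I * (-(Complex.I) / 2) = (2⁻¹ : ℂ) := by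
    rw [← mul_div_assoc, mul_neg, Complex.I_mul_I, neg_neg]
    norm_num
  have hX : X = (2⁻¹ : ℂ) • (X + Xᴴ) + Complex.I • ((-(Complex.I) / 2 : ℂ) • (X - Xᴴ)) := by
    rw [smul_smul, h2]
    module
  have hXH : Xᴴ = (2⁻¹ : ℂ) • (X + Xᴴ) - Complex.I • ((-(Complex.I) / 2 : ℂ) • (X - Xᴴ)) := by
    rw [smul_smul, h2]
    module
  have e1 : Λ (Xᴴ) = Λ ((2⁻¹ : ℂ) • (X + Xᴴ)) - Complex.I • Λ ((-(Complex.I) / 2 : ℂ) • (X - Xᴴ)) := by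
    conv_lhs => rw [hXH]
    simp only [map_sub, _root_.map_smul]
  have e2 : (Λ X)ᴴ = (Λ ((2⁻¹ : ℂ) • (X + Xᴴ)) + Complex.I • Λ ((-(Complex.I) / 2 : ℂ) • (X - Xᴴ)))ᴴ := by
    conv_lhs => rw [hX]
    simp only [map_add, _root_.map_smul]
  rw [e1, e2, Matrix.conjTranspose_add, Matrix.conjTranspose_smul,
    (map_herm hpos hH1h).eq, (map_herm hpos hH2h).eq]
  simp only [Complex.star_def, Complex.conj_I]
  module

lemma vecMulVec_psd (x : Fin d → ℂ) : (Matrix.vecMulVec x (star x)).PosSemidef := by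
  refine Matrix.PosSemidef.of_dotProduct_mulVec_nonneg ?_ ?_
  · ext a b
    simp only [Matrix.conjTranspose_apply, Matrix.vecMulVec_apply, Pi.star_apply, star_mul',
      star_star]
    ring
  · intro z
    have he : star z ⬝ᵥ (Matrix.vecMulVec x (star x)) *ᵥ z =
        (∑ i, star (z i) * x i) * star (∑ i, star (z i) * x i) := by
      rw [dotProduct, star_sum]
      simp only [Matrix.mulVec, dotProduct, Matrix.vecMulVec_apply, Pi.star_apply,
        star_mul', star_star, Finset.mul_sum, Finset.sum_mul]
      rw [Finset.sum_comm]
      refine Finset.sum_congr rfl fun i _ => Finset.sum_congr rfl fun j _ => ?_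
      ring
    rw [he]
    exact mul_star_self_nonneg _

lemma adj_psd (hpos : ∀ X : Matrix (Fin d) (Fin d) ℂ, X.PosSemidef → (Λ X).PosSemidef)
    {H : Matrix (Fin d) (Fin d) ℂ} (hH : H.PosSemidef) : (hsAdj Λ H).PosSemidef := by
  refine Matrix.PosSemidef.of_dotProduct_mulVec_nonneg ?_ ?_
  · ext i j
    rw [Matrix.conjTranspose_apply, adj_apply, adj_apply]
    rw [show Matrix.single j i (1 : ℂ) = (Matrix.single i j (1 : ℂ))ᴴ from
      (stdBasis_conjT i j).symm]
    rw [map_conjTranspose hpos, Matrix.conjTranspose_conjTranspose]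
    calc star ((Λ (Matrix.single i j 1) * H).trace)
        = ((Λ (Matrix.single i j 1) * H)ᴴ).trace := by
          rw [Matrix.trace_conjTranspose]
      _ = (Hᴴ * (Λ (Matrix.single i j 1))ᴴ).trace := by
          rw [Matrix.conjTranspose_mul]
      _ = ((Λ (Matrix.single i j 1))ᴴ * H).trace := by
          rw [hH.1.eq, Matrix.trace_mul_comm]
  · intro x
    have hYsum : Matrix.vecMulVec x (star x) =
        ∑ i, ∑ j, (x i * star (x j)) • Matrix.single i j (1 : ℂ) := by
      ext a b
      rw [Matrix.vecMulVec_apply, Matrix.sum_apply]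
      simp only [Matrix.sum_apply, Matrix.smul_apply, Matrix.single, Matrix.of_apply,
        smul_eq_mul, mul_ite, mul_one, mul_zero]
      rw [Finset.sum_eq_single a]
      · rw [Finset.sum_eq_single b]
        · simp
        · intro c _ hc
          simp [hc]
        · intro hb
          exact absurd (Finset.mem_univ b) hb
      · intro c _ hc
        apply Finset.sum_eq_zero
        intro k _
        rw [if_neg]
        rintro ⟨rfl, rfl⟩
        exact hc rfl
      · intro ha
        exact absurd (Finset.mem_univ a) ha
    have key : dotProduct (star x) (hsAdj Λ H *ᵥ x) =
        ((Λ (Matrix.vecMulVec x (star x)))ᴴ * H).trace := by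
      rw [hYsum, map_sum]
      simp only [map_sum, _root_.map_smul, Matrix.conjTranspose_sum, Matrix.conjTranspose_smul,
        Matrix.sum_mul, Matrix.smul_mul, Matrix.trace_sum, Matrix.trace_smul, smul_eq_mul,
        star_mul', star_star]
      rw [dotProduct]
      simp only [Matrix.mulVec, dotProduct, Pi.star_apply, adj_apply, Finset.mul_sum]
      refine Finset.sum_congr rfl fun i _ => Finset.sum_congr rfl fun j _ => ?_
      ring
    rw [key]
    have hY := hpos _ (vecMulVec_psd x)
    rw [hY.1.eq]
    exact psd_trace_mul_nonneg hY hH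

end Adj


end BoydAux

open BoydAux in
/-- lower bound on the normalized Boyd iterate for a positivity improving,
trace preserving positive map with `‖Λ‖_{∞→∞} ≤ 1`, for `1 ≤ p ≤ 2 ≤ q ≤ ∞`. -/
theorem boyd_iterate_lower_bound
    {d : ℕ} (hd : 0 < d) (N : ℝ) (hN : 0 < N)
    (Λ : Matrix (Fin d) (Fin d) ℂ →ₗ[ℂ] Matrix (Fin d) (Fin d) ℂ)
    (hpos : ∀ X : Matrix (Fin d) (Fin d) ℂ, X.PosSemidef → (Λ X).PosSemidef)
    (himp : ∀ ω : Matrix (Fin d) (Fin d) ℂ, ω.PosSemidef →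
      (Λ ω - (ω.trace / (((N : ℝ) : ℂ) * (d : ℂ))) • 1).PosSemidef)
    (hnorm : mapMixedNorm ∞ ∞ Λ ≤ 1)
    (hTP : ∀ X, (Λ X).trace = X.trace)
    (p : ℝ) (q : ℝ≥0∞) (hp1 : 1 ≤ p) (hp2 : p ≤ 2) (hq : 2 ≤ q)
    (ω : Matrix (Fin d) (Fin d) ℂ) (hω : ω.PosSemidef) (hωn : sNorm q ω = 1) :
    ((((sNorm q (boydS Λ p ((1/(q-1)).toReal) ω))⁻¹ : ℝ) : ℂ) •
        boydS Λ p ((1/(q-1)).toReal) ω -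
      ((((N * d) ^ ((1 - p) * (1/(q-1)).toReal) * (d : ℝ) ^ (-(1/q).toReal) : ℝ)) : ℂ) •
        1).PosSemidef ∧
    1 / (N * d * Real.sqrt d) ≤
      (N * d) ^ ((1 - p) * (1/(q-1)).toReal) * (d : ℝ) ^ (-(1/q).toReal) := by
  classical
  have hd1 : (1:ℝ) ≤ (d:ℝ) := by exact_mod_cast hd
  have hdpos : (0:ℝ) < (d:ℝ) := by positivity
  have ha : (0:ℝ) < N * d := by positivity
  set e := (1/(q-1) : ℝ≥0∞).toReal with he
  have he0 : 0 ≤ e := ENNReal.toReal_nonneg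
  have he1 : e ≤ 1 := by
    rcases eq_or_ne q ∞ with h | h
    · simp [he, h]
    · have h1 : (1:ℝ≥0∞) ≤ q - 1 :=
        ENNReal.le_sub_of_add_le_left (by norm_num) (by simpa [one_add_one_eq_two] using hq)
      have h3 : (1/(q-1) : ℝ≥0∞) ≤ 1 := by
        rw [one_div]
        exact ENNReal.inv_le_one.mpr h1
      have h4 : (1/(q-1) : ℝ≥0∞).toReal ≤ (1 : ℝ≥0∞).toReal :=
        ENNReal.toReal_mono (by norm_num) h3
      simpa [he, one_div] using h4
  have hp1' : (0:ℝ) ≤ p - 1 := by linarith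
  have hp2' : p - 1 ≤ 1 := by linarith
  -- eigenvalues of ω
  have hωh := hω.1
  set T := ∑ i, hωh.eigenvalues i with hT
  have hlo0 : ∀ i, 0 ≤ hωh.eigenvalues i := hω.eigenvalues_nonneg
  have hT0 : 0 ≤ T := Finset.sum_nonneg fun i _ => hlo0 i
  have hloT : ∀ i, hωh.eigenvalues i ≤ T :=
    fun i => Finset.single_le_sum (f := fun i => hωh.eigenvalues i)
      (fun i _ => hlo0 i) (Finset.mem_univ i)
  have h1T : 1 ≤ T := by
    rw [← hωn]
    apply BoydAux.sNorm_le_T hq hT0 (BoydAux.mu_le hωh hlo0 hloT)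
    rw [BoydAux.sum_mu hωh]
    calc ∑ i, hωh.eigenvalues i ^ 2 ≤ ∑ i, hωh.eigenvalues i * T := by
          refine Finset.sum_le_sum fun i _ => ?_
          rw [pow_two]
          exact mul_le_mul_of_nonneg_left (hloT i) (hlo0 i)
      _ = T ^ 2 := by rw [← Finset.sum_mul, pow_two]
  -- sNorm ∞ bounds on ω
  have hμω1 := BoydAux.mu_le_one_of_sNorm_eq_one hq hωn
  have hsω_le1 : sNorm ∞ ω ≤ 1 := by
    rw [BoydAux.sNorm_inf_def]
    refine Real.iSup_le (fun j => ?_) (by norm_num)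
    calc Real.sqrt _ ≤ Real.sqrt 1 := Real.sqrt_le_sqrt (hμω1 j)
      _ = 1 := Real.sqrt_one
  have hsω_pos : 0 < sNorm ∞ ω := by
    rcases eq_or_lt_of_le (BoydAux.sNorm_inf_nonneg hd ω) with h | h
    · exfalso
      have hμ0 : ∀ j, (Matrix.posSemidef_conjTranspose_mul_self ω).1.eigenvalues j = 0 := by
        intro j
        have h1 := BoydAux.sqrt_mu_le ω j
        rw [← h] at h1
        have h2 := Real.sqrt_nonneg ((Matrix.posSemidef_conjTranspose_mul_self ω).1.eigenvalues j)
        have h3 : Real.sqrt ((Matrix.posSemidef_conjTranspose_mul_self ω).1.eigenvalues j) = 0 := le_antisymm h1 h2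
        have h4 := BoydAux.mu_nonneg ω j
        nlinarith [Real.sq_sqrt h4]
      have h5 : ∑ i, hωh.eigenvalues i ^ 2 = 0 := by
        rw [← BoydAux.sum_mu hωh]
        exact Finset.sum_eq_zero fun j _ => hμ0 j
      have h6 : ∀ i, hωh.eigenvalues i ^ 2 = 0 := by
        intro i
        have := Finset.sum_eq_zero_iff_of_nonneg (fun i _ => sq_nonneg (hωh.eigenvalues i)) |>.mp h5
        exact this i (Finset.mem_univ i)
      have h7 : T = 0 := by
        rw [hT]
        exact Finset.sum_eq_zero fun i _ => by nlinarith [h6 i]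
      linarith
    · exact h
  have hΛω_le : sNorm ∞ (Λ ω) ≤ 1 :=
    le_trans (BoydAux.sNorm_map_le_self Λ hd hnorm hsω_pos) hsω_le1
  -- eigenvalues of Λω
  have hΛω := hpos ω hω
  have hΛωh := hΛω.1
  have hLle1 : ∀ i, hΛωh.eigenvalues i ≤ 1 := by
    have hμΛω : ∀ j, (Matrix.posSemidef_conjTranspose_mul_self (Λ ω)).1.eigenvalues j ≤ 1 := by
      intro j
      have h1 := BoydAux.mu_le_sNorm_inf_sq (Λ ω) j
      have h2 := BoydAux.sNorm_inf_nonneg hd (Λ ω)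
      nlinarith
    have hpsd1 : (((1:ℝ):ℂ) • 1 - (Λ ω)ᴴ * (Λ ω)).PosSemidef :=
      (BoydAux.herm_le_iff (Matrix.posSemidef_conjTranspose_mul_self (Λ ω)).1 1).mpr hμΛω
    rw [BoydAux.herm_sq hΛωh] at hpsd1
    have h3 := (BoydAux.conj_diag_le_iff _ _ _).mp hpsd1
    intro i
    have h4 := h3 i
    nlinarith [hΛω.eigenvalues_nonneg i]
  have htrace : ω.trace = ((T:ℝ):ℂ) := by
    conv_lhs => rw [BoydAux.spectral hωh]
    exact BoydAux.trace_conj_diag _ _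
  have hEig_geT : ∀ i, T / (N*d) ≤ hΛωh.eigenvalues i := by
    have h0 := himp ω hω
    rw [htrace] at h0
    have hsc : (((T:ℝ):ℂ) / (((N : ℝ) : ℂ) * (d : ℂ))) = ((T/(N*d) : ℝ) : ℂ) := by
      push_cast
      ring
    rw [hsc] at h0
    exact (BoydAux.herm_ge_iff hΛωh _).mp h0
  have hLge : ∀ i, (N*d)⁻¹ ≤ hΛωh.eigenvalues i := by
    intro i
    calc (N*d)⁻¹ = 1/(N*d) := by rw [one_div]
      _ ≤ T/(N*d) := by gcongr
      _ ≤ hΛωh.eigenvalues i := hEig_geT i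
  have hNd : 1 ≤ N * d := by
    have h1 := hEig_geT ⟨0, hd⟩
    have h2 := hLle1 ⟨0, hd⟩
    have h3 : T / (N*d) ≤ 1 := le_trans h1 h2
    rw [div_le_one ha] at h3
    linarith
  -- M = mpow (Λω) (p-1)
  set a := (N*d)⁻¹ with hadef
  have ha0 : 0 < a := inv_pos.mpr ha
  set α1 := a ^ (p-1) with hα1def
  have hα1pos : 0 < α1 := Real.rpow_pos_of_pos ha0 _
  have hM_ge : (mpow (Λ ω) (p-1) - ((α1:ℝ):ℂ) • 1).PosSemidef := by
    rw [BoydAux.mpow_eq hΛωh]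
    exact (BoydAux.conj_diag_ge_iff _ _ _).mpr fun i =>
      Real.rpow_le_rpow ha0.le (hLge i) hp1'
  have hM_le : (((1:ℝ):ℂ) • 1 - mpow (Λ ω) (p-1)).PosSemidef := by
    rw [BoydAux.mpow_eq hΛωh]
    exact (BoydAux.conj_diag_le_iff _ _ _).mpr fun i =>
      Real.rpow_le_one (le_trans ha0.le (hLge i)) (hLle1 i) hp1'
  -- B = hsAdj Λ M
  have hadj1 := BoydAux.adj_one Λ hTP
  have hB_ge : (hsAdj Λ (mpow (Λ ω) (p-1)) - ((α1:ℝ):ℂ) • 1).PosSemidef := by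
    have h1 := BoydAux.adj_psd hpos hM_ge
    rwa [map_sub, _root_.map_smul, hadj1] at h1
  have hB_le : (((1:ℝ):ℂ) • 1 - hsAdj Λ (mpow (Λ ω) (p-1))).PosSemidef := by
    have h1 := BoydAux.adj_psd hpos hM_le
    rwa [map_sub, _root_.map_smul, hadj1] at h1
  have hBpsd : (hsAdj Λ (mpow (Λ ω) (p-1))).PosSemidef := by
    have h1 := hB_ge.add (BoydAux.psd_smul_one hα1pos.le)
    simpa using h1
  have hBh := hBpsd.1
  have hν_ge : ∀ i, α1 ≤ hBh.eigenvalues i := (BoydAux.herm_ge_iff hBh α1).mp hB_ge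
  have hν_le : ∀ i, hBh.eigenvalues i ≤ 1 := (BoydAux.herm_le_iff hBh 1).mp hB_le
  -- S = boydS
  have hSeq : boydS Λ p e ω = mpow (hsAdj Λ (mpow (Λ ω) (p-1))) e := rfl
  set α := α1 ^ e with hαdef
  have hα0 : 0 < α := Real.rpow_pos_of_pos hα1pos e
  have hS_ge : (boydS Λ p e ω - ((α:ℝ):ℂ) • 1).PosSemidef := by
    rw [hSeq, BoydAux.mpow_eq hBh]
    exact (BoydAux.conj_diag_ge_iff _ _ _).mpr fun i =>
      Real.rpow_le_rpow hα1pos.le (hν_ge i) he0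
  have hS_le : (((1:ℝ):ℂ) • 1 - boydS Λ p e ω).PosSemidef := by
    rw [hSeq, BoydAux.mpow_eq hBh]
    exact (BoydAux.conj_diag_le_iff _ _ _).mpr fun i =>
      Real.rpow_le_one (le_trans hα1pos.le (hν_ge i)) (hν_le i) he0
  have hSpsd : (boydS Λ p e ω).PosSemidef := by
    have h1 := hS_ge.add (BoydAux.psd_smul_one hα0.le)
    simpa using h1
  have hSh := hSpsd.1
  set β := sNorm q (boydS Λ p e ω) with hβdef
  have hβ_ge : α ≤ β :=
    BoydAux.le_sNorm hd hq hα0.le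
      (BoydAux.mu_ge hSh hα0.le ((BoydAux.herm_ge_iff hSh α).mp hS_ge))
  have hβ_le : β ≤ 1 * (d:ℝ) ^ (1/q : ℝ≥0∞).toReal :=
    BoydAux.sNorm_le_dim hq zero_le_one
      (BoydAux.mu_le hSh (fun i => le_trans hα0.le ((BoydAux.herm_ge_iff hSh α).mp hS_ge i))
        ((BoydAux.herm_le_iff hSh 1).mp hS_le))
  have hβpos : 0 < β := lt_of_lt_of_le hα0 hβ_ge
  -- constants
  set x := (1/q : ℝ≥0∞).toReal with hx
  set c := (N * d) ^ ((1 - p) * e) * (d : ℝ) ^ (-x) with hc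
  have hαc : α = (N*d) ^ ((1-p)*e) := by
    rw [hαdef, hα1def, hadef, ← Real.rpow_mul (inv_nonneg.mpr ha.le),
      Real.inv_rpow ha.le, ← Real.rpow_neg ha.le]
    congr 1
    ring
  have hc0 : 0 ≤ c := by
    rw [hc]
    positivity
  have hxd : (d:ℝ) ^ (-x) * (d:ℝ) ^ x = 1 := by
    rw [← Real.rpow_add hdpos]
    simp
  have hcβ : c * β ≤ α := by
    calc c * β ≤ c * (1 * (d:ℝ) ^ x) := mul_le_mul_of_nonneg_left hβ_le hc0
      _ = (N*d) ^ ((1-p)*e) * ((d:ℝ) ^ (-x) * (d:ℝ) ^ x) := by rw [hc]; ring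
      _ = α := by rw [hxd, mul_one, hαc]
  constructor
  · -- PSD part
    have hkey : (boydS Λ p e ω - ((c * β : ℝ):ℂ) • 1).PosSemidef := by
      have hsc : ((c * β : ℝ):ℂ) • (1 : Matrix (Fin d) (Fin d) ℂ) =
          ((α:ℝ):ℂ) • 1 - ((α - c * β : ℝ):ℂ) • 1 := by
        rw [← sub_smul]
        congr 1
        push_cast
        ring
      have h1 : boydS Λ p e ω - ((c * β : ℝ):ℂ) • 1 =
          (boydS Λ p e ω - ((α:ℝ):ℂ) • 1) + (((α - c * β : ℝ)):ℂ) • 1 := by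
        rw [hsc]
        abel
      rw [h1]
      exact hS_ge.add (BoydAux.psd_smul_one (by linarith))
    have h2 : ((β⁻¹ : ℝ):ℂ) • boydS Λ p e ω - ((c:ℝ):ℂ) • 1 =
        ((β⁻¹ : ℝ):ℂ) • (boydS Λ p e ω - ((c * β : ℝ):ℂ) • 1) := by
      rw [smul_sub, smul_smul]
      congr 2
      push_cast
      field_simp
    rw [h2]
    exact BoydAux.psd_smul_real hkey (inv_nonneg.mpr hβpos.le)
  · -- scalar part
    have hx2 : x ≤ 1/2 := by
      have h1 : (1/q : ℝ≥0∞) ≤ 1/2 := by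
        rw [one_div, one_div]
        exact ENNReal.inv_le_inv.mpr hq
      have h2 : (1/q : ℝ≥0∞).toReal ≤ ((1:ℝ≥0∞)/2).toReal :=
        ENNReal.toReal_mono (by norm_num) h1
      rw [hx]
      refine le_trans h2 ?_
      norm_num
    have h5 : (p-1)*e ≤ 1 := by
      calc (p-1)*e ≤ 1*1 := mul_le_mul hp2' he1 he0 zero_le_one
        _ = 1 := by norm_num
    have hexp : -1 ≤ (1-p)*e := by
      rw [show (1-p)*e = -((p-1)*e) by ring]
      linarith
    have h1 : (N*d) ^ (-1 : ℝ) ≤ (N*d) ^ ((1-p)*e) :=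
      Real.rpow_le_rpow_of_exponent_le hNd hexp
    have h2 : (d:ℝ) ^ (-(1/2) : ℝ) ≤ (d:ℝ) ^ (-x) :=
      Real.rpow_le_rpow_of_exponent_le hd1 (by linarith)
    have h3 : 1 / (N * d * Real.sqrt d) = (N*d) ^ (-1 : ℝ) * (d:ℝ) ^ (-(1/2) : ℝ) := by
      rw [Real.rpow_neg_one, Real.rpow_neg hdpos.le, Real.sqrt_eq_rpow]
      rw [one_div, mul_inv]
    rw [hc, h3]
    exact mul_le_mul h1 h2 (Real.rpow_nonneg hdpos.le _) (Real.rpow_nonneg (by positivity) _)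


end
end
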